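/- arXiv:1104.4999 — 5 statements merged into one kernel-verified Lean document; each statement's English description precedes it below -/
import Mathlib

section
/- Let C ∈ M_ℓ(ℂ) be Hermitian positive definite and let 𝒜 be the set of all A ∈ M_ℓ(ℂ) with det A = 1. Then inf_{A ∈ 𝒜} (1/ℓ)·tr(A C A†) = (det C)^{1/ℓ}, where for each A ∈ 𝒜 the trace tr(A C A†) is a positive real number and det C is a positive real number; moreover the infimum is attained. -/
open Matrix
open scoped ComplexOrder

/-- The trace of a Hermitian matrix is the sum of its eigenvalues. -/
lemma trace_eq_sum_eigs {n : Type*} [Fintype n] [DecidableEq n]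
    {M : Matrix n n ℂ} (hM : M.IsHermitian) :
    M.trace = ∑ i, (hM.eigenvalues i : ℂ) := by
  conv_lhs => rw [hM.spectral_theorem]
  rw [Unitary.conjStarAlgAut_apply, Matrix.trace_mul_cycle]
  rw [show (star (hM.eigenvectorUnitary : Matrix n n ℂ)) *
      (hM.eigenvectorUnitary : Matrix n n ℂ) = 1 from
    Unitary.coe_star_mul_self hM.eigenvectorUnitary, one_mul, Matrix.trace_diagonal]
  rfl

/-- For a Hermitian positive definite `C`, the infimum of `(1/ℓ)·tr(A C A†)` over
all matrices `A` with `det A = 1` equals `(det C)^(1/ℓ)`, and it is attained;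
moreover each `tr(A C A†)` and `det C` are positive real numbers. -/
theorem inf_trace_eq_det_rpow {ℓ : ℕ} (hℓ : 0 < ℓ)
    (C : Matrix (Fin ℓ) (Fin ℓ) ℂ) (hC : C.PosDef) :
    (0 < C.det.re ∧ C.det.im = 0) ∧
    (∀ A : Matrix (Fin ℓ) (Fin ℓ) ℂ, A.det = 1 →
        0 < (A * C * Aᴴ).trace.re ∧ (A * C * Aᴴ).trace.im = 0) ∧
    IsLeast {x : ℝ | ∃ A : Matrix (Fin ℓ) (Fin ℓ) ℂ,
        A.det = 1 ∧ x = (1 / (ℓ : ℝ)) * (A * C * Aᴴ).trace.re}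
      (C.det.re ^ ((1 : ℝ) / (ℓ : ℝ))) := by
  have hdetC : (0 : ℂ) < C.det := hC.det_pos
  have hdetC' : 0 < C.det.re ∧ C.det.im = 0 := by
    rw [Complex.lt_def] at hdetC
    exact ⟨by simpa using hdetC.1, by simpa using hdetC.2.symm⟩
  have hℓR : (0 : ℝ) < (ℓ : ℝ) := by exact_mod_cast hℓ
  -- the key lower bound, for any A with det A = 1
  have key : ∀ A : Matrix (Fin ℓ) (Fin ℓ) ℂ, A.det = 1 →
      (A * C * Aᴴ).trace.im = 0 ∧
      C.det.re ^ ((1 : ℝ) / (ℓ : ℝ)) ≤ (1 / (ℓ : ℝ)) * (A * C * Aᴴ).trace.re := by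
    intro A hA
    have hM : (A * C * Aᴴ).PosSemidef := hC.posSemidef.mul_mul_conjTranspose_same A
    set M := A * C * Aᴴ with hMdef
    have hdetM : M.det = C.det := by
      rw [hMdef, det_mul, det_mul, det_conjTranspose, hA, one_mul, star_one, mul_one]
    have htr : M.trace = ∑ i, (hM.1.eigenvalues i : ℂ) := trace_eq_sum_eigs hM.1
    have htr_re : M.trace.re = ∑ i, hM.1.eigenvalues i := by
      rw [htr]
      push_cast [Complex.re_sum]
      simp
    have htr_im : M.trace.im = 0 := by
      rw [htr]
      push_cast [Complex.im_sum]
      simp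
    have hdet_prod : M.det = ((∏ i, hM.1.eigenvalues i : ℝ) : ℂ) := by
      rw [hM.1.det_eq_prod_eigenvalues]
      push_cast
      rfl
    have hdet_re : C.det.re = ∏ i, hM.1.eigenvalues i := by
      rw [← hdetM, hdet_prod, Complex.ofReal_re]
    refine ⟨htr_im, ?_⟩
    have hz : ∀ i ∈ Finset.univ, (0:ℝ) ≤ hM.1.eigenvalues i :=
      fun i _ => hM.eigenvalues_nonneg i
    have amgm := Real.geom_mean_le_arith_mean_weighted Finset.univ
      (fun _ => 1 / (ℓ : ℝ)) hM.1.eigenvalues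
      (fun i _ => by positivity)
      (by simp [Finset.sum_const, Finset.card_univ]; field_simp) hz
    have hprod : (∏ i, hM.1.eigenvalues i ^ ((1:ℝ) / (ℓ : ℝ)))
        = (∏ i, hM.1.eigenvalues i) ^ ((1:ℝ) / (ℓ : ℝ)) :=
      Real.finset_prod_rpow Finset.univ _ hz _
    rw [hprod] at amgm
    rw [hdet_re, htr_re, Finset.mul_sum]
    exact amgm
  refine ⟨hdetC', ?_, ?_⟩
  · intro A hA
    obtain ⟨him, hle⟩ := key A hA
    refine ⟨?_, him⟩
    have h0 : (0:ℝ) < C.det.re ^ ((1 : ℝ) / (ℓ : ℝ)) := Real.rpow_pos_of_pos hdetC'.1 _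
    nlinarith [h0.trans_le hle, one_div_pos.mpr hℓR]
  · constructor
    · -- attained: A = t • S⁻¹ with S = sqrt C
      open MatrixOrder in
      have hS : (CFC.sqrt C).PosSemidef := (CFC.sqrt_nonneg C).posSemidef
      open MatrixOrder in
      set S := CFC.sqrt C with hSdef
      open MatrixOrder in
      have hSS : S * S = C := CFC.sqrt_mul_sqrt_self C hC.posSemidef.nonneg
      have hdetS_prod : S.det = ((∏ i, hS.1.eigenvalues i : ℝ) : ℂ) := by
        rw [hS.1.det_eq_prod_eigenvalues]; push_cast; rfl
      set d : ℝ := ∏ i, hS.1.eigenvalues i with hddef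
      have hdnn : 0 ≤ d := Finset.prod_nonneg fun i _ => hS.eigenvalues_nonneg i
      have hd2 : (d:ℂ) * (d:ℂ) = C.det := by
        rw [← hdetS_prod, ← Matrix.det_mul, hSS]
      have hd2' : d * d = C.det.re := by
        have := congrArg Complex.re hd2
        simpa using this
      have hdpos : 0 < d := by
        rcases hdnn.lt_or_eq with h | h
        · exact h
        · exfalso; rw [← h] at hd2'; simp at hd2'; linarith [hdetC'.1, hd2'.symm ▸ hdetC'.1]
      have hdetS : S.det = (d : ℂ) := hdetS_prod
      have hdetS_ne : S.det ≠ 0 := by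
        rw [hdetS]; exact_mod_cast hdpos.ne'
      set t : ℝ := d ^ ((1:ℝ) / (ℓ : ℝ)) with htdef
      have htpos : 0 < t := Real.rpow_pos_of_pos hdpos _
      set A : Matrix (Fin ℓ) (Fin ℓ) ℂ := (t : ℂ) • S⁻¹ with hAdef
      have htpow : (t : ℝ) ^ (ℓ : ℕ) = d := by
        rw [htdef, ← Real.rpow_natCast (d ^ ((1:ℝ)/(ℓ:ℝ))) ℓ, ← Real.rpow_mul hdnn]
        rw [one_div, inv_mul_cancel₀ hℓR.ne']
        exact Real.rpow_one d
      have hdetA : A.det = 1 := by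
        rw [hAdef, Matrix.det_smul, Matrix.det_nonsing_inv, hdetS]
        rw [show ((t:ℂ))^(Fintype.card (Fin ℓ)) = ((d:ℝ):ℂ) by
          rw [Fintype.card_fin]; exact_mod_cast congrArg Complex.ofReal htpow]
        rw [Ring.inverse_eq_inv]
        exact mul_inv_cancel₀ (by exact_mod_cast hdpos.ne')
      have hSinv_herm : S⁻¹ᴴ = S⁻¹ := by
        rw [Matrix.conjTranspose_nonsing_inv, hS.1.eq]
      have hACA : A * C * Aᴴ = ((t:ℂ)*(t:ℂ)) • (1 : Matrix (Fin ℓ) (Fin ℓ) ℂ) := by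
        rw [hAdef, Matrix.conjTranspose_smul, hSinv_herm]
        have : ((t:ℂ)•S⁻¹) * C * (star (t:ℂ) • S⁻¹) = (star (t:ℂ) * t) • (S⁻¹ * C * S⁻¹) := by
          rw [Matrix.smul_mul, Matrix.mul_smul, Matrix.smul_mul, smul_smul, mul_comm]
        rw [this]
        have hmid : S⁻¹ * C * S⁻¹ = 1 := by
          rw [← hSS, show S⁻¹ * (S * S) * S⁻¹ = (S⁻¹ * S) * (S * S⁻¹) by
            simp [Matrix.mul_assoc]]
          rw [Matrix.nonsing_inv_mul _ hdetS_ne.isUnit, Matrix.mul_nonsing_inv _ hdetS_ne.isUnit, one_mul]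
        rw [hmid, Complex.star_def, Complex.conj_ofReal]
      refine ⟨A, hdetA, ?_⟩
      have htr : ((((t:ℂ)*(t:ℂ)) • (1 : Matrix (Fin ℓ) (Fin ℓ) ℂ)).trace) = (((t*t)*ℓ : ℝ) : ℂ) := by
        rw [Matrix.trace_smul, Matrix.trace_one, smul_eq_mul]
        push_cast [Fintype.card_fin]
        ring
      have ht2 : t * t = C.det.re ^ ((1 : ℝ) / (ℓ : ℝ)) := by
        rw [← hd2', Real.mul_rpow hdnn hdnn]
      rw [hACA, htr, Complex.ofReal_re, ← ht2]
      field_simp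
    · rintro x ⟨A, hA, rfl⟩
      exact (key A hA).2
end

section
/- (Matrix Jensen inequality for the logarithm.) Let f : [0,2π) → M_ℓ(ℂ) be a measurable function whose values are Hermitian positive definite matrices, such that f is entrywise integrable with respect to dθ/(2π) and θ ↦ log f(θ) is entrywise integrable with respect to dθ/(2π). Then the matrix F := ∫_0^{2π} f(θ) dθ/(2π) is Hermitian positive definite and ∫_0^{2π} log f(θ) dθ/(2π) ⪯ log F. -/
open MeasureTheory
open scoped ComplexOrder

/-- The logarithm of a Hermitian matrix, defined through the spectral theorem. -/
noncomputable def matLog {ℓ : ℕ} {A : Matrix (Fin ℓ) (Fin ℓ) ℂ}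
    (hA : A.IsHermitian) : Matrix (Fin ℓ) (Fin ℓ) ℂ :=
  (hA.eigenvectorUnitary : Matrix (Fin ℓ) (Fin ℓ) ℂ) *
    Matrix.diagonal (fun i => (Real.log (hA.eigenvalues i) : ℂ)) *
    star (hA.eigenvectorUnitary : Matrix (Fin ℓ) (Fin ℓ) ℂ)

namespace MJL
open Matrix Finset Set Filter

variable {ℓ : ℕ} {A : Matrix (Fin ℓ) (Fin ℓ) ℂ}

lemma quad_conj (U M : Matrix (Fin ℓ) (Fin ℓ) ℂ) (v : Fin ℓ → ℂ) :
    star v ⬝ᵥ (U * M * star U) *ᵥ v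
      = star ((star U) *ᵥ v) ⬝ᵥ M *ᵥ ((star U) *ᵥ v) := by
  have h1 : star ((star U) *ᵥ v) = star v ᵥ* U := by
    rw [star_mulVec, star_eq_conjTranspose, conjTranspose_conjTranspose]
  rw [h1, ← dotProduct_mulVec, ← mulVec_mulVec, ← mulVec_mulVec]

lemma quad_sum' (W : Matrix (Fin ℓ) (Fin ℓ) ℂ) (c : Fin ℓ → ℂ) :
    star c ⬝ᵥ W *ᵥ c = ∑ j, ∑ k, (starRingEnd ℂ) (c j) * W j k * c k := by
  simp only [dotProduct, mulVec, dotProduct, Pi.star_apply, RCLike.star_def, Finset.mul_sum,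
    mul_assoc]

lemma quad_diag (d : Fin ℓ → ℝ) (c : Fin ℓ → ℂ) :
    star c ⬝ᵥ (diagonal fun i => (d i : ℂ)) *ᵥ c
      = ((∑ i, d i * Complex.normSq (c i) : ℝ) : ℂ) := by
  push_cast
  rw [quad_sum']
  rw [Finset.sum_congr rfl fun j _ => Finset.sum_eq_single j
    (fun k _ hk => by simp [diagonal_apply_ne _ (Ne.symm hk)])
    (by simp)]
  refine Finset.sum_congr rfl fun j _ => ?_
  rw [diagonal_apply_eq]
  rw [Complex.normSq_eq_conj_mul_self]
  ring

lemma quad_UdU (U : Matrix (Fin ℓ) (Fin ℓ) ℂ) (d : Fin ℓ → ℝ) (v : Fin ℓ → ℂ) :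
    star v ⬝ᵥ (U * diagonal (fun i => (d i : ℂ)) * star U) *ᵥ v
      = ((∑ i, d i * Complex.normSq (((star U) *ᵥ v) i) : ℝ) : ℂ) := by
  rw [quad_conj, quad_diag]

lemma sum_normSq (U : Matrix (Fin ℓ) (Fin ℓ) ℂ) (hU : U * star U = 1) (v : Fin ℓ → ℂ) :
    ∑ i, Complex.normSq (((star U) *ᵥ v) i) = ∑ i, Complex.normSq (v i) := by
  have h1 : (1 : Matrix (Fin ℓ) (Fin ℓ) ℂ) = Matrix.diagonal (fun i => ((1 : ℝ) : ℂ)) := by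
    simp
  have h2 := quad_UdU U (fun _ => (1:ℝ)) v
  rw [show U * diagonal (fun i : Fin ℓ => ((1:ℝ):ℂ)) * star U = 1 by
    rw [← h1, Matrix.mul_one, hU]] at h2
  rw [h1] at h2
  rw [quad_diag] at h2
  have := Complex.ofReal_inj.mp h2
  simpa using this.symm

lemma quad_QMQ (U M : Matrix (Fin ℓ) (Fin ℓ) ℂ) (d : Fin ℓ → ℝ) (v : Fin ℓ → ℂ) :
    star v ⬝ᵥ ((U * diagonal (fun i => (d i : ℂ)) * star U) * M *
        (U * diagonal (fun i => (d i : ℂ)) * star U)) *ᵥ v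
      = ∑ j, ∑ k, ((d j * d k : ℝ) : ℂ) *
          ((starRingEnd ℂ) (((star U) *ᵥ v) j) * (star U * M * U) j k * ((star U) *ᵥ v) k) := by
  have hassoc : (U * diagonal (fun i => (d i : ℂ)) * star U) * M *
        (U * diagonal (fun i => (d i : ℂ)) * star U)
      = U * (diagonal (fun i => (d i : ℂ)) * (star U * M * U) * diagonal (fun i => (d i : ℂ)))
          * star U := by
    simp only [Matrix.mul_assoc]
  rw [hassoc, quad_conj, quad_sum']
  refine Finset.sum_congr rfl fun j _ => Finset.sum_congr rfl fun k _ => ?_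
  rw [mul_diagonal, diagonal_mul]
  push_cast
  ring

lemma UdU_herm (U : Matrix (Fin ℓ) (Fin ℓ) ℂ) (d : Fin ℓ → ℝ) :
    (U * diagonal (fun i => (d i : ℂ)) * star U).IsHermitian := by
  unfold Matrix.IsHermitian
  simp only [star_eq_conjTranspose, conjTranspose_mul, conjTranspose_conjTranspose,
    diagonal_conjTranspose]
  rw [mul_assoc]
  congr 1
  ext i j
  by_cases h : i = j <;> simp [h, diagonal_apply_ne, Matrix.star_apply]

lemma UdU_psd (U : Matrix (Fin ℓ) (Fin ℓ) ℂ) (d : Fin ℓ → ℝ) (hd : ∀ i, 0 ≤ d i) :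
    (U * diagonal (fun i => (d i : ℂ)) * star U).PosSemidef := by
  have hdiag : (diagonal (fun i => (d i : ℂ))).PosSemidef :=
    PosSemidef.diagonal fun i => by
      simpa using Complex.zero_le_real.mpr (hd i)
  have := hdiag.mul_mul_conjTranspose_same U
  rwa [star_eq_conjTranspose]

/-- The resolvent-like matrix from eigendata. -/
noncomputable def RS (hA : A.IsHermitian) (s : ℝ) : Matrix (Fin ℓ) (Fin ℓ) ℂ :=
  (hA.eigenvectorUnitary : Matrix (Fin ℓ) (Fin ℓ) ℂ) *
    diagonal (fun i => (((hA.eigenvalues i + s)⁻¹ : ℝ) : ℂ)) *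
    star (hA.eigenvectorUnitary : Matrix (Fin ℓ) (Fin ℓ) ℂ)

lemma RS_herm (hA : A.IsHermitian) (s : ℝ) : (RS hA s).IsHermitian := UdU_herm _ _

lemma RS_psd (hA : A.IsHermitian) (s : ℝ) (h : ∀ i, 0 ≤ (hA.eigenvalues i + s)⁻¹) :
    (RS hA s).PosSemidef := UdU_psd _ _ h

lemma quad_RS (hA : A.IsHermitian) (s : ℝ) (v : Fin ℓ → ℂ) :
    star v ⬝ᵥ (RS hA s) *ᵥ v
      = ((∑ i, (hA.eigenvalues i + s)⁻¹ * Complex.normSq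
          (((star (hA.eigenvectorUnitary : Matrix (Fin ℓ) (Fin ℓ) ℂ)) *ᵥ v) i) : ℝ) : ℂ) :=
  quad_UdU _ _ _

lemma quad_RS_mid (hA : A.IsHermitian) (s : ℝ) (M : Matrix (Fin ℓ) (Fin ℓ) ℂ) (v : Fin ℓ → ℂ) :
    star v ⬝ᵥ ((RS hA s) * M * (RS hA s)) *ᵥ v
      = ∑ j, ∑ k, (((hA.eigenvalues j + s)⁻¹ * (hA.eigenvalues k + s)⁻¹ : ℝ) : ℂ) *
          ((starRingEnd ℂ) (((star (hA.eigenvectorUnitary : Matrix (Fin ℓ) (Fin ℓ) ℂ)) *ᵥ v) j) *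
            ((star (hA.eigenvectorUnitary : Matrix (Fin ℓ) (Fin ℓ) ℂ)) * M *
              (hA.eigenvectorUnitary : Matrix (Fin ℓ) (Fin ℓ) ℂ)) j k *
            (((star (hA.eigenvectorUnitary : Matrix (Fin ℓ) (Fin ℓ) ℂ)) *ᵥ v) k)) :=
  quad_QMQ _ _ _ _

lemma quad_matLog (hA : A.IsHermitian) (v : Fin ℓ → ℂ) :
    star v ⬝ᵥ (matLog hA) *ᵥ v
      = ((∑ i, Real.log (hA.eigenvalues i) * Complex.normSq
          (((star (hA.eigenvectorUnitary : Matrix (Fin ℓ) (Fin ℓ) ℂ)) *ᵥ v) i) : ℝ) : ℂ) :=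
  quad_UdU _ _ _

lemma matLog_herm (hA : A.IsHermitian) : (matLog hA).IsHermitian := UdU_herm _ _

lemma spectral (hA : A.IsHermitian) (s : ℝ) :
    A + Matrix.diagonal (fun _ => (s : ℂ)) =
      (hA.eigenvectorUnitary : Matrix (Fin ℓ) (Fin ℓ) ℂ) *
        diagonal (fun i => ((hA.eigenvalues i + s : ℝ) : ℂ)) *
        star (hA.eigenvectorUnitary : Matrix (Fin ℓ) (Fin ℓ) ℂ) := by
  set U := (hA.eigenvectorUnitary : Matrix (Fin ℓ) (Fin ℓ) ℂ)
  have hUU : U * star U = 1 := Matrix.mem_unitaryGroup_iff.mp hA.eigenvectorUnitary.2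
  have h1 : Matrix.diagonal (fun _ : Fin ℓ => (s : ℂ)) = U * Matrix.diagonal (fun _ => (s : ℂ)) * star U := by
    have : Matrix.diagonal (fun _ : Fin ℓ => (s : ℂ)) = (s : ℂ) • (1 : Matrix (Fin ℓ) (Fin ℓ) ℂ) := by
      rw [smul_eq_diagonal_mul, Matrix.mul_one]
    rw [this, mul_smul_comm, mul_one, smul_mul_assoc, hUU]
  nth_rewrite 1 [hA.spectral_theorem, h1]
  simp only [Unitary.conjStarAlgAut_apply, Unitary.coe_star]
  rw [← Matrix.add_mul, ← Matrix.mul_add]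
  have h2 : Matrix.diagonal (RCLike.ofReal ∘ hA.eigenvalues) + Matrix.diagonal (fun _ : Fin ℓ => (s : ℂ))
      = Matrix.diagonal (fun i => ((hA.eigenvalues i + s : ℝ) : ℂ)) := by
    rw [diagonal_add]
    congr 1
    funext i
    simp [Function.comp]
  rw [h2]

lemma RS_mul_left (hA : A.IsHermitian) (s : ℝ) (h : ∀ i, hA.eigenvalues i + s ≠ 0) :
    RS hA s * (A + Matrix.diagonal (fun _ => (s : ℂ))) = 1 := by
  set U := (hA.eigenvectorUnitary : Matrix (Fin ℓ) (Fin ℓ) ℂ)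
  have hUU : U * star U = 1 := Matrix.mem_unitaryGroup_iff.mp hA.eigenvectorUnitary.2
  have hUU' : star U * U = 1 := Matrix.mem_unitaryGroup_iff'.mp hA.eigenvectorUnitary.2
  rw [spectral hA s, RS]
  calc U * diagonal (fun i => (((hA.eigenvalues i + s)⁻¹ : ℝ) : ℂ)) * star U *
        (U * diagonal (fun i => ((hA.eigenvalues i + s : ℝ) : ℂ)) * star U)
      = U * (diagonal (fun i => (((hA.eigenvalues i + s)⁻¹ : ℝ) : ℂ)) * ((star U * U) *
          diagonal (fun i => ((hA.eigenvalues i + s : ℝ) : ℂ)))) * star U := by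
        simp only [Matrix.mul_assoc]
    _ = 1 := by
        rw [hUU', Matrix.one_mul, diagonal_mul_diagonal]
        have : (fun i => (((hA.eigenvalues i + s)⁻¹ : ℝ) : ℂ) * ((hA.eigenvalues i + s : ℝ) : ℂ))
            = fun _ => (1 : ℂ) := by
          funext i
          push_cast
          rw [inv_mul_cancel₀]
          exact_mod_cast Complex.ofReal_ne_zero.mpr (h i)
        rw [this, diagonal_one, Matrix.mul_one, hUU]

lemma RS_mul_right (hA : A.IsHermitian) (s : ℝ) (h : ∀ i, hA.eigenvalues i + s ≠ 0) :
    (A + Matrix.diagonal (fun _ => (s : ℂ))) * RS hA s = 1 := by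
  set U := (hA.eigenvectorUnitary : Matrix (Fin ℓ) (Fin ℓ) ℂ)
  have hUU : U * star U = 1 := Matrix.mem_unitaryGroup_iff.mp hA.eigenvectorUnitary.2
  have hUU' : star U * U = 1 := Matrix.mem_unitaryGroup_iff'.mp hA.eigenvectorUnitary.2
  rw [spectral hA s, RS]
  calc U * diagonal (fun i => ((hA.eigenvalues i + s : ℝ) : ℂ)) * star U *
        (U * diagonal (fun i => (((hA.eigenvalues i + s)⁻¹ : ℝ) : ℂ)) * star U)
      = U * (diagonal (fun i => ((hA.eigenvalues i + s : ℝ) : ℂ)) * ((star U * U) *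
          diagonal (fun i => (((hA.eigenvalues i + s)⁻¹ : ℝ) : ℂ)))) * star U := by
        simp only [Matrix.mul_assoc]
    _ = 1 := by
        rw [hUU', Matrix.one_mul, diagonal_mul_diagonal]
        have : (fun i => ((hA.eigenvalues i + s : ℝ) : ℂ) * (((hA.eigenvalues i + s)⁻¹ : ℝ) : ℂ))
            = fun _ => (1 : ℂ) := by
          funext i
          push_cast
          rw [mul_inv_cancel₀]
          exact_mod_cast Complex.ofReal_ne_zero.mpr (h i)
        rw [this, diagonal_one, Matrix.mul_one, hUU]

lemma key_alg (P Q X Y S : Matrix (Fin ℓ) (Fin ℓ) ℂ)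
    (hQl : Q * (Y + S) = 1) (hQr : (Y + S) * Q = 1)
    (hPl : P * (X + S) = 1) (hPr : (X + S) * P = 1) :
    P - Q + Q * (X - Y) * Q = (Q * (X - Y)) * P * ((X - Y) * Q) := by
  have h1 : Q * (X - Y) * P = Q - P := by
    have : Q * (X - Y) * P = Q * ((X + S) * P) - (Q * (Y + S)) * P := by noncomm_ring
    rw [this, hPr, hQl, Matrix.mul_one, Matrix.one_mul]
  have h2 : P * (X - Y) * Q = Q - P := by
    have : P * (X - Y) * Q = (P * (X + S)) * Q - P * ((Y + S) * Q) := by noncomm_ring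
    rw [this, hPl, hQr, Matrix.mul_one, Matrix.one_mul]
  have h3 : (Q * (X - Y)) * P * ((X - Y) * Q) = (Q * (X - Y) * P) * ((X - Y) * Q) := by
    noncomm_ring
  rw [h3, h1, Matrix.sub_mul, ← Matrix.mul_assoc, ← Matrix.mul_assoc, h2]
  noncomm_ring

lemma integrableOn_inv_sq {m : ℝ} (hm : 0 < m) :
    IntegrableOn (fun s => (m + s)⁻¹ * (m + s)⁻¹) (Set.Ioi (0:ℝ)) := by
  have hderiv : ∀ x ∈ Ici (0:ℝ), HasDerivAt (fun s => -(m + s)⁻¹) ((m + x)⁻¹ * (m + x)⁻¹) x := by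
    intro x hx
    have hx0 : (0:ℝ) ≤ x := hx
    have hmx : m + x ≠ 0 := by positivity
    have h1 : HasDerivAt (fun s : ℝ => m + s) 1 x := (hasDerivAt_id x).const_add m
    have h2 := (h1.inv hmx).neg
    refine h2.congr_deriv ?_
    field_simp
  have hpos : ∀ x ∈ Ioi (0:ℝ), 0 ≤ (m + x)⁻¹ * (m + x)⁻¹ := by
    intro x hx
    have hx0 : (0:ℝ) < x := hx
    positivity
  have htends : Tendsto (fun s : ℝ => -(m + s)⁻¹) atTop (nhds 0) := by
    rw [show (0:ℝ) = -0 by ring]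
    exact (tendsto_inv_atTop_zero.comp (tendsto_atTop_add_const_left _ m tendsto_id)).neg
  exact integrableOn_Ioi_deriv_of_nonneg' hderiv hpos htends

lemma integrableOn_inv_mul {a b : ℝ} (ha : 0 < a) (hb : 0 < b) :
    IntegrableOn (fun s => (a + s)⁻¹ * (b + s)⁻¹) (Set.Ioi (0:ℝ)) := by
  set m := min a b with hm
  have hm0 : 0 < m := lt_min ha hb
  refine Integrable.mono' (integrableOn_inv_sq hm0) ?_ ?_
  · refine ContinuousOn.aestronglyMeasurable ?_ measurableSet_Ioi
    have h1 : ContinuousOn (fun s : ℝ => (a + s)⁻¹) (Ioi 0) :=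
      ((continuous_const.add continuous_id).continuousOn).inv₀ fun s hs =>
        (by have : (0:ℝ) < s := hs; positivity : (0:ℝ) < _ + s).ne'
    have h2 : ContinuousOn (fun s : ℝ => (b + s)⁻¹) (Ioi 0) :=
      ((continuous_const.add continuous_id).continuousOn).inv₀ fun s hs =>
        (by have : (0:ℝ) < s := hs; positivity : (0:ℝ) < _ + s).ne'
    exact h1.mul h2
  · filter_upwards [ae_restrict_mem measurableSet_Ioi] with s hs
    have hs0 : (0:ℝ) < s := hs
    have h1 : (a + s)⁻¹ ≤ (m + s)⁻¹ := by
      apply inv_anti₀ (by positivity)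
      gcongr
      exact min_le_left a b
    have h2 : (b + s)⁻¹ ≤ (m + s)⁻¹ := by
      apply inv_anti₀ (by positivity)
      gcongr
      exact min_le_right a b
    rw [Real.norm_eq_abs, abs_of_nonneg (by positivity)]
    exact mul_le_mul h1 h2 (by positivity) (by positivity)

lemma L1_integrable {x : ℝ} (hx : 0 < x) :
    IntegrableOn (fun s => (1 + s)⁻¹ - (x + s)⁻¹) (Set.Ioi (0:ℝ)) := by
  have heq : Set.EqOn (fun s => (1 + s)⁻¹ - (x + s)⁻¹)
      (fun s => (x - 1) * ((1 + s)⁻¹ * (x + s)⁻¹)) (Ioi 0) := by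
    intro s hs
    have hs0 : (0:ℝ) < s := hs
    have h1 : (1:ℝ) + s ≠ 0 := by positivity
    have h2 : x + s ≠ 0 := by positivity
    field_simp
    ring
  rw [integrableOn_congr_fun heq measurableSet_Ioi]
  exact (integrableOn_inv_mul one_pos hx).const_mul _

lemma L1_value {x : ℝ} (hx : 0 < x) :
    ∫ s in Set.Ioi (0:ℝ), ((1 + s)⁻¹ - (x + s)⁻¹) = Real.log x := by
  have hderiv : ∀ s ∈ Ici (0:ℝ), HasDerivAt (fun s => Real.log (1 + s) - Real.log (x + s))
      ((1 + s)⁻¹ - (x + s)⁻¹) s := by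
    intro s hs
    have hs0 : (0:ℝ) ≤ s := hs
    have h1 : (1:ℝ) + s ≠ 0 := by positivity
    have h2 : x + s ≠ 0 := by positivity
    have d1 : HasDerivAt (fun s : ℝ => 1 + s) 1 s := (hasDerivAt_id s).const_add 1
    have d2 : HasDerivAt (fun s : ℝ => x + s) 1 s := (hasDerivAt_id s).const_add x
    have l1 := (Real.hasDerivAt_log h1).comp s d1
    have l2 := (Real.hasDerivAt_log h2).comp s d2
    have := l1.sub l2; simp only [mul_one] at this; exact this
  have htends : Tendsto (fun s => Real.log (1 + s) - Real.log (x + s)) atTop (nhds 0) := by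
    have h1 : Tendsto (fun s : ℝ => (1 + s) / (x + s)) atTop (nhds 1) := by
      have h2 : Tendsto (fun s : ℝ => 1 + (1 - x) * (x + s)⁻¹) atTop (nhds 1) := by
        have h0 : Tendsto (fun s : ℝ => (x + s)⁻¹) atTop (nhds 0) :=
          tendsto_inv_atTop_zero.comp (tendsto_atTop_add_const_left _ x tendsto_id)
        simpa using tendsto_const_nhds.add (h0.const_mul (1 - x))
      refine h2.congr' ?_
      filter_upwards [eventually_gt_atTop (0:ℝ)] with s hs
      have h2 : x + s ≠ 0 := by positivity
      field_simp
      ring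
    have h3 : Tendsto (fun s : ℝ => Real.log ((1 + s) / (x + s))) atTop (nhds 0) := by
      rw [show (0:ℝ) = Real.log 1 by simp]
      exact (Real.continuousAt_log one_ne_zero).tendsto.comp h1
    refine h3.congr' ?_
    filter_upwards [eventually_gt_atTop (0:ℝ)] with s hs
    rw [Real.log_div (by positivity) (by positivity)]
  rw [integral_Ioi_of_hasDerivAt_of_tendsto' hderiv (L1_integrable hx) htends]
  simp [Real.log_one]

lemma quad_of_integral (g : ℝ → Matrix (Fin ℓ) (Fin ℓ) ℂ) (S : Set ℝ) (c : ℝ)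
    (hg : ∀ i j, IntegrableOn (fun θ => g θ i j) S) (v : Fin ℓ → ℂ) :
    star v ⬝ᵥ (Matrix.of fun i j => c • ∫ θ in S, g θ i j) *ᵥ v
      = c • ∫ θ in S, star v ⬝ᵥ (g θ) *ᵥ v := by
  rw [quad_sum']
  have hterm : ∀ j k, (starRingEnd ℂ) (v j) * ((Matrix.of fun i j => c • ∫ θ in S, g θ i j) j k)
      * v k = c • ∫ θ in S, (starRingEnd ℂ) (v j) * g θ j k * v k := by
    intro j k
    rw [Matrix.of_apply, mul_smul_comm, smul_mul_assoc]
    congr 1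
    rw [integral_mul_const, integral_const_mul]
  calc ∑ j, ∑ k, (starRingEnd ℂ) (v j) * ((Matrix.of fun i j => c • ∫ θ in S, g θ i j) j k) * v k
      = ∑ j, ∑ k, c • ∫ θ in S, (starRingEnd ℂ) (v j) * g θ j k * v k := by
        exact Finset.sum_congr rfl fun j _ => Finset.sum_congr rfl fun k _ => hterm j k
    _ = c • ∫ θ in S, ∑ j, ∑ k, (starRingEnd ℂ) (v j) * g θ j k * v k := by
        have hint2 : ∀ j k, IntegrableOn (fun θ => (starRingEnd ℂ) (v j) * g θ j k * v k) S :=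
          fun j k => ((hg j k).const_mul _).mul_const _
        simp only [← Finset.smul_sum]
        congr 1
        have h1 : ∀ j : Fin ℓ, ∑ k, ∫ θ in S, (starRingEnd ℂ) (v j) * g θ j k * v k
            = ∫ θ in S, ∑ k, (starRingEnd ℂ) (v j) * g θ j k * v k :=
          fun j => (integral_finset_sum _ fun k _ => hint2 j k).symm
        rw [Finset.sum_congr rfl fun j _ => h1 j,
          ← integral_finset_sum _ fun j _ => integrable_finset_sum _ fun k _ => hint2 j k]
    _ = c • ∫ θ in S, star v ⬝ᵥ (g θ) *ᵥ v := by
        congr 1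
        refine integral_congr_ae (Filter.Eventually.of_forall fun θ => ?_)
        exact (quad_sum' (g θ) v).symm

lemma herm_of_integral (g : ℝ → Matrix (Fin ℓ) (Fin ℓ) ℂ) (S : Set ℝ) (c : ℝ)
    (hg : ∀ θ, (g θ).IsHermitian) :
    (Matrix.of fun i j => c • ∫ θ in S, g θ i j).IsHermitian := by
  refine Matrix.IsHermitian.ext fun i j => ?_
  simp only [Matrix.of_apply, star_smul, star_trivial]
  have h1 : (∫ θ in S, g θ i j) = ∫ θ in S, (starRingEnd ℂ) (g θ j i) :=
    integral_congr_ae (Filter.Eventually.of_forall fun θ => ((hg θ).apply i j).symm)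
  rw [h1, integral_conj]
  rfl

lemma core (f : ℝ → Matrix (Fin ℓ) (Fin ℓ) ℂ) (hf : ∀ θ, (f θ).PosDef)
    (hint : ∀ i j, IntegrableOn (fun θ => f θ i j) (Set.Ico 0 (2 * Real.pi)))
    (hlogint : ∀ i j,
      IntegrableOn (fun θ => matLog (hf θ).1 i j) (Set.Ico 0 (2 * Real.pi)))
    {F : Matrix (Fin ℓ) (Fin ℓ) ℂ} (hFpos : F.PosDef)
    (hFeq : F = Matrix.of fun i j =>
      ((2 * Real.pi)⁻¹ : ℝ) • ∫ θ in Set.Ico 0 (2 * Real.pi), f θ i j) :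
    (matLog hFpos.1 -
      Matrix.of fun i j =>
        ((2 * Real.pi)⁻¹ : ℝ) •
          ∫ θ in Set.Ico 0 (2 * Real.pi), matLog (hf θ).1 i j).PosSemidef := by
  classical
  have h2π : (0:ℝ) < 2 * Real.pi := Real.two_pi_pos
  have hIvol : volume (Set.Ico 0 (2 * Real.pi)) = ENNReal.ofReal (2 * Real.pi) := by
    rw [Real.volume_Ico]; norm_num
  have hIfin : volume (Set.Ico 0 (2 * Real.pi)) < ⊤ := by
    rw [hIvol]; exact ENNReal.ofReal_lt_top
  -- eigen-data of F
  have hμpos : ∀ j, 0 < hFpos.1.eigenvalues j := fun j => hFpos.eigenvalues_pos j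
  refine Matrix.PosSemidef.of_dotProduct_mulVec_nonneg ?_ ?_
  · exact (matLog_herm hFpos.1).sub (herm_of_integral _ _ _ (fun θ => matLog_herm (hf θ).1))
  intro v
  -- notation
  set U : Matrix (Fin ℓ) (Fin ℓ) ℂ := (hFpos.1.eigenvectorUnitary : Matrix (Fin ℓ) (Fin ℓ) ℂ)
    with hUdef
  set b : Fin ℓ → ℂ := (star U) *ᵥ v with hbdef
  set μ : Fin ℓ → ℝ := hFpos.1.eigenvalues with hμdef
  -- the integrand matrix N θ
  set N : ℝ → Matrix (Fin ℓ) (Fin ℓ) ℂ := fun θ => (star U) * (f θ - F) * U with hNdef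
  -- θ-integrability of entries of f θ - F and of N
  have hsubint : ∀ p q, IntegrableOn (fun θ => f θ p q - F p q) (Set.Ico 0 (2 * Real.pi)) :=
    fun p q => (hint p q).sub (integrableOn_const hIfin.ne)
  have hNint : ∀ j k, IntegrableOn (fun θ => N θ j k) (Set.Ico 0 (2 * Real.pi)) := by
    intro j k
    have hNexp : (fun θ => N θ j k)
        = fun θ => ∑ q, (∑ p, (star U) j p * (f θ p q - F p q)) * U q k := by
      funext θ
      rw [hNdef]
      simp [Matrix.mul_apply, Matrix.sub_apply]
    rw [hNexp]
    refine integrable_finset_sum _ fun q _ => Integrable.mul_const ?_ _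
    exact integrable_finset_sum _ fun p _ => (hsubint p q).const_mul _
  -- ∫ of N vanishes
  have hNzero : ∀ j k, (∫ θ in Set.Ico 0 (2 * Real.pi), N θ j k) = 0 := by
    intro j k
    have hz : ∀ p q, (∫ θ in Set.Ico 0 (2 * Real.pi), (f θ p q - F p q)) = 0 := by
      intro p q
      rw [integral_sub (hint p q) (integrableOn_const hIfin.ne)]
      rw [setIntegral_const, measureReal_def, hIvol, ENNReal.toReal_ofReal h2π.le]
      rw [hFeq]
      simp only [Matrix.of_apply]
      rw [smul_smul, mul_inv_cancel₀ h2π.ne', one_smul, sub_self]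
    have hNexp : (fun θ => N θ j k)
        = fun θ => ∑ q, (∑ p, (star U) j p * (f θ p q - F p q)) * U q k := by
      funext θ
      rw [hNdef]
      simp [Matrix.mul_apply, Matrix.sub_apply]
    rw [hNexp]
    rw [integral_finset_sum _ (fun q _ => Integrable.mul_const
      (integrable_finset_sum _ fun p _ => (hsubint p q).const_mul _) _)]
    refine Finset.sum_eq_zero fun q _ => ?_
    rw [integral_mul_const]
    rw [integral_finset_sum _ (fun p _ => (hsubint p q).const_mul _)]
    have : ∀ p, (∫ θ in Set.Ico 0 (2 * Real.pi), (star U) j p * (f θ p q - F p q)) = 0 := by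
      intro p
      rw [integral_const_mul, hz p q, mul_zero]
    rw [Finset.sum_congr rfl fun p _ => this p]
    simp
  -- Ijk
  set Ijk : Fin ℓ → Fin ℓ → ℝ := fun j k => ∫ s in Set.Ioi (0:ℝ), (μ j + s)⁻¹ * (μ k + s)⁻¹
    with hIjkdef
  -- G θ
  set G : ℝ → ℝ := fun θ => ∑ j, ∑ k,
    Ijk j k * ((starRingEnd ℂ) (b j) * N θ j k * b k).re with hGdef
  -- QF
  set QF : ℝ := ∑ j, Real.log (μ j) * Complex.normSq (b j) with hQFdef
  -- Qre
  set Qre : ℝ → ℝ := fun θ => (star v ⬝ᵥ (matLog (hf θ).1) *ᵥ v).re with hQredef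
  have hUUF : U * star U = 1 := Matrix.mem_unitaryGroup_iff.mp hFpos.1.eigenvectorUnitary.2
  -- the central pointwise-in-θ inequality
  have key : ∀ θ, Qre θ ≤ QF + G θ := by
    intro θ
    set Uθ : Matrix (Fin ℓ) (Fin ℓ) ℂ :=
      ((hf θ).1.eigenvectorUnitary : Matrix (Fin ℓ) (Fin ℓ) ℂ) with hUθdef
    set c : Fin ℓ → ℂ := (star Uθ) *ᵥ v with hcdef
    set lam : Fin ℓ → ℝ := (hf θ).1.eigenvalues with hlamdef
    have hlampos : ∀ i, 0 < lam i := fun i => (hf θ).eigenvalues_pos i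
    have hUUθ : Uθ * star Uθ = 1 := Matrix.mem_unitaryGroup_iff.mp (hf θ).1.eigenvectorUnitary.2
    have hmass : ∑ i, Complex.normSq (c i) = ∑ j, Complex.normSq (b j) := by
      rw [hcdef, hbdef, sum_normSq _ hUUθ v, sum_normSq _ hUUF v]
    have hQre : Qre θ = ∑ i, Real.log (lam i) * Complex.normSq (c i) := by
      show (star v ⬝ᵥ (matLog (hf θ).1) *ᵥ v).re = _
      have h1 : star v ⬝ᵥ (matLog (hf θ).1) *ᵥ v
          = ((∑ i, Real.log (lam i) * Complex.normSq (c i) : ℝ) : ℂ) := by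
        rw [hlamdef, hcdef, hUθdef]; exact quad_matLog (hf θ).1 v
      rw [h1, Complex.ofReal_re]
    set ψ : ℝ → ℝ := fun s => (∑ i, ((lam i + s)⁻¹ - (1+s)⁻¹) * Complex.normSq (c i))
      + ∑ j, ((1+s)⁻¹ - (μ j + s)⁻¹) * Complex.normSq (b j) with hψdef
    set g : ℝ → ℝ := fun s => ∑ j, ∑ k,
      ((μ j + s)⁻¹ * (μ k + s)⁻¹) * ((starRingEnd ℂ) (b j) * N θ j k * b k).re with hgdef
    -- pointwise nonnegativity
    have hpt : ∀ s ∈ Set.Ioi (0:ℝ), 0 ≤ ψ s + g s := by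
      intro s hs
      have hs0 : (0:ℝ) < s := hs
      have hlamne : ∀ i, (hf θ).1.eigenvalues i + s ≠ 0 := fun i => by
        have := hlampos i; rw [hlamdef] at this; positivity
      have hμne : ∀ i, hFpos.1.eigenvalues i + s ≠ 0 := fun i => by
        have := hμpos i; positivity
      have halg := key_alg (RS (hf θ).1 s) (RS hFpos.1 s) (f θ) F (diagonal fun _ => (s:ℂ))
        (RS_mul_left hFpos.1 s hμne) (RS_mul_right hFpos.1 s hμne)
        (RS_mul_left (hf θ).1 s hlamne) (RS_mul_right (hf θ).1 s hlamne)
      have hconj : ((f θ - F) * RS hFpos.1 s)ᴴ = RS hFpos.1 s * (f θ - F) := by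
        rw [conjTranspose_mul, (RS_herm hFpos.1 s).eq, ((hf θ).1.sub hFpos.1).eq]
      have hpsd : (RS (hf θ).1 s - RS hFpos.1 s
          + RS hFpos.1 s * (f θ - F) * RS hFpos.1 s).PosSemidef := by
        rw [halg, ← hconj]
        exact (RS_psd (hf θ).1 s (fun i => by
          have := hlampos i; rw [hlamdef] at this; positivity)).conjTranspose_mul_mul_same _
      have hquad := hpsd.dotProduct_mulVec_nonneg v
      have hP : star v ⬝ᵥ (RS (hf θ).1 s) *ᵥ v
          = ((∑ i, (lam i + s)⁻¹ * Complex.normSq (c i) : ℝ) : ℂ) := by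
        rw [hlamdef, hcdef, hUθdef]; exact quad_RS (hf θ).1 s v
      have hQ : star v ⬝ᵥ (RS hFpos.1 s) *ᵥ v
          = ((∑ j, (μ j + s)⁻¹ * Complex.normSq (b j) : ℝ) : ℂ) := by
        rw [hμdef, hbdef, hUdef]; exact quad_RS hFpos.1 s v
      have hM : star v ⬝ᵥ (RS hFpos.1 s * (f θ - F) * RS hFpos.1 s) *ᵥ v
          = ∑ j, ∑ k, (((μ j + s)⁻¹ * (μ k + s)⁻¹ : ℝ) : ℂ) *
              ((starRingEnd ℂ) (b j) * N θ j k * b k) := by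
        rw [hμdef, hbdef, hUdef, hNdef]; exact quad_RS_mid hFpos.1 s (f θ - F) v
      rw [Matrix.add_mulVec, Matrix.sub_mulVec, dotProduct_add, dotProduct_sub,
        hP, hQ, hM] at hquad
      have hre := (Complex.le_def.mp hquad).1
      simp only [Complex.add_re, Complex.sub_re, Complex.ofReal_re, Complex.zero_re,
        Complex.re_sum, Complex.re_ofReal_mul] at hre
      have hψs : ψ s = (∑ i, (lam i + s)⁻¹ * Complex.normSq (c i))
          - ∑ j, (μ j + s)⁻¹ * Complex.normSq (b j) := by
        rw [hψdef]
        simp only [sub_mul, Finset.sum_sub_distrib]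
        have e1 : ∑ i, (1+s)⁻¹ * Complex.normSq (c i)
            = (1+s)⁻¹ * ∑ i, Complex.normSq (c i) := (Finset.mul_sum _ _ _).symm
        have e2 : ∑ j, (1+s)⁻¹ * Complex.normSq (b j)
            = (1+s)⁻¹ * ∑ j, Complex.normSq (b j) := (Finset.mul_sum _ _ _).symm
        rw [e1, e2, hmass]
        ring
      rw [hψs, hgdef]
      linarith [hre]
    -- integrability and values of the s-integrals
    have hterm1 : ∀ i : Fin ℓ, IntegrableOn
        (fun s => ((lam i + s)⁻¹ - (1+s)⁻¹) * Complex.normSq (c i)) (Set.Ioi 0) := by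
      intro i
      have h := (L1_integrable (hlampos i)).neg
      have heq : (fun s => ((lam i + s)⁻¹ - (1+s)⁻¹) * Complex.normSq (c i))
          = fun s => (-((1+s)⁻¹ - (lam i + s)⁻¹)) * Complex.normSq (c i) := by
        funext s; ring
      rw [heq]
      exact h.mul_const _
    have hterm2 : ∀ j : Fin ℓ, IntegrableOn
        (fun s => ((1+s)⁻¹ - (μ j + s)⁻¹) * Complex.normSq (b j)) (Set.Ioi 0) :=
      fun j => (L1_integrable (hμpos j)).mul_const _
    have hψint : IntegrableOn ψ (Set.Ioi 0) := by
      simp only [hψdef]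
      exact Integrable.add (integrable_finset_sum _ fun i _ => hterm1 i)
        (integrable_finset_sum _ fun j _ => hterm2 j)
    have hψval : ∫ s in Set.Ioi (0:ℝ), ψ s = QF - Qre θ := by
      have hsplit : ∫ s in Set.Ioi (0:ℝ), ψ s
          = (∑ i, ∫ s in Set.Ioi (0:ℝ), ((lam i + s)⁻¹ - (1+s)⁻¹) * Complex.normSq (c i))
            + ∑ j, ∫ s in Set.Ioi (0:ℝ), ((1+s)⁻¹ - (μ j + s)⁻¹) * Complex.normSq (b j) := by
        simp only [hψdef]
        rw [integral_add (integrable_finset_sum _ fun i _ => hterm1 i)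
            (integrable_finset_sum _ fun j _ => hterm2 j),
          integral_finset_sum _ (fun i _ => hterm1 i),
          integral_finset_sum _ (fun j _ => hterm2 j)]
      rw [hsplit]
      have hv1 : ∀ i, ∫ s in Set.Ioi (0:ℝ), ((lam i + s)⁻¹ - (1+s)⁻¹) * Complex.normSq (c i)
          = -(Real.log (lam i) * Complex.normSq (c i)) := by
        intro i
        rw [integral_mul_const]
        have heq2 : ∫ s in Set.Ioi (0:ℝ), ((lam i + s)⁻¹ - (1+s)⁻¹)
            = - ∫ s in Set.Ioi (0:ℝ), ((1+s)⁻¹ - (lam i + s)⁻¹) := by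
          rw [← integral_neg]
          congr 1; funext s; ring
        rw [heq2, L1_value (hlampos i)]; ring
      have hv2 : ∀ j, ∫ s in Set.Ioi (0:ℝ), ((1+s)⁻¹ - (μ j + s)⁻¹) * Complex.normSq (b j)
          = Real.log (μ j) * Complex.normSq (b j) := by
        intro j
        rw [integral_mul_const, L1_value (hμpos j)]
      rw [Finset.sum_congr rfl fun i _ => hv1 i, Finset.sum_congr rfl fun j _ => hv2 j,
        hQre, hQFdef]
      rw [Finset.sum_neg_distrib]
      ring
    have hgterm : ∀ j k : Fin ℓ, IntegrableOn
        (fun s => ((μ j + s)⁻¹ * (μ k + s)⁻¹) * ((starRingEnd ℂ) (b j) * N θ j k * b k).re)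
        (Set.Ioi 0) :=
      fun j k => (integrableOn_inv_mul (hμpos j) (hμpos k)).mul_const _
    have hgint : IntegrableOn g (Set.Ioi 0) := by
      simp only [hgdef]
      exact integrable_finset_sum _ fun j _ => integrable_finset_sum _ fun k _ => hgterm j k
    have hgval : ∫ s in Set.Ioi (0:ℝ), g s = G θ := by
      simp only [hgdef, hGdef, hIjkdef]
      rw [integral_finset_sum _ (fun j _ => integrable_finset_sum _ fun k _ => hgterm j k)]
      refine Finset.sum_congr rfl fun j _ => ?_
      rw [integral_finset_sum _ (fun k _ => hgterm j k)]
      refine Finset.sum_congr rfl fun k _ => ?_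
      rw [integral_mul_const]
    have h0 : 0 ≤ ∫ s in Set.Ioi (0:ℝ), (ψ s + g s) :=
      setIntegral_nonneg measurableSet_Ioi hpt
    rw [integral_add hψint hgint, hψval, hgval] at h0
    linarith
  -- integrability of the θ-integrands
  have hqint : IntegrableOn (fun θ => star v ⬝ᵥ (matLog (hf θ).1) *ᵥ v)
      (Set.Ico 0 (2 * Real.pi)) := by
    have he : (fun θ => star v ⬝ᵥ (matLog (hf θ).1) *ᵥ v)
        = fun θ => ∑ j, ∑ k, (starRingEnd ℂ) (v j) * matLog (hf θ).1 j k * v k :=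
      funext fun θ => quad_sum' _ _
    rw [he]
    exact integrable_finset_sum _ fun j _ => integrable_finset_sum _ fun k _ =>
      ((hlogint j k).const_mul _).mul_const _
  have hQreint : IntegrableOn Qre (Set.Ico 0 (2 * Real.pi)) := by
    simp only [hQredef]
    have := hqint.re
    simpa [IntegrableOn] using this
  have hwint : ∀ j k : Fin ℓ, IntegrableOn
      (fun θ => (starRingEnd ℂ) (b j) * N θ j k * b k) (Set.Ico 0 (2 * Real.pi)) :=
    fun j k => ((hNint j k).const_mul _).mul_const _
  have hGint : IntegrableOn G (Set.Ico 0 (2 * Real.pi)) := by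
    simp only [hGdef]
    refine integrable_finset_sum _ fun j _ => integrable_finset_sum _ fun k _ => ?_
    have := ((hwint j k).re).const_mul (Ijk j k)
    simpa [IntegrableOn] using this
  have hineq : ∫ θ in Set.Ico 0 (2 * Real.pi), Qre θ
      ≤ ∫ θ in Set.Ico 0 (2 * Real.pi), (QF + G θ) :=
    setIntegral_mono_on hQreint ((integrableOn_const hIfin.ne).add hGint)
      measurableSet_Ico fun θ _ => key θ
  have hGzero : ∫ θ in Set.Ico 0 (2 * Real.pi), G θ = 0 := by
    simp only [hGdef]
    rw [integral_finset_sum _ (fun j _ => integrable_finset_sum _ fun k _ => by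
      have := ((hwint j k).re).const_mul (Ijk j k); simpa [IntegrableOn] using this)]
    refine Finset.sum_eq_zero fun j _ => ?_
    rw [integral_finset_sum _ (fun k _ => by
      have := ((hwint j k).re).const_mul (Ijk j k); simpa [IntegrableOn] using this)]
    refine Finset.sum_eq_zero fun k _ => ?_
    rw [integral_const_mul]
    have h2 : ∫ θ in Set.Ico 0 (2 * Real.pi), ((starRingEnd ℂ) (b j) * N θ j k * b k) = 0 := by
      rw [integral_mul_const, integral_const_mul, hNzero j k]
      simp
    have h3 := integral_re (hwint j k)
    rw [h2] at h3
    simp only [RCLike.re_to_complex, Complex.zero_re] at h3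
    rw [h3, mul_zero]
  have hconst : ∫ θ in Set.Ico 0 (2 * Real.pi), (QF + G θ) = 2 * Real.pi * QF := by
    rw [integral_add (integrableOn_const (C := QF) hIfin.ne) hGint, hGzero, setIntegral_const,
      measureReal_def, hIvol, ENNReal.toReal_ofReal h2π.le, add_zero, smul_eq_mul]
  have hfinal : (2 * Real.pi)⁻¹ * ∫ θ in Set.Ico 0 (2 * Real.pi), Qre θ ≤ QF := by
    rw [inv_mul_le_iff₀ h2π]
    calc ∫ θ in Set.Ico 0 (2 * Real.pi), Qre θ
        ≤ ∫ θ in Set.Ico 0 (2 * Real.pi), (QF + G θ) := hineq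
      _ = 2 * Real.pi * QF := hconst
  -- final complex algebra
  have hlogF : star v ⬝ᵥ (matLog hFpos.1) *ᵥ v = ((QF : ℝ) : ℂ) := by
    simp only [hQFdef, hμdef, hbdef, hUdef]
    exact quad_matLog hFpos.1 v
  have hLquad : star v ⬝ᵥ (Matrix.of fun i j =>
      ((2 * Real.pi)⁻¹ : ℝ) • ∫ θ in Set.Ico 0 (2 * Real.pi), matLog (hf θ).1 i j) *ᵥ v
      = ((2 * Real.pi)⁻¹ : ℝ) • ∫ θ in Set.Ico 0 (2 * Real.pi),
          star v ⬝ᵥ (matLog (hf θ).1) *ᵥ v :=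
    quad_of_integral _ _ _ hlogint v
  have hq : ∀ θ, star v ⬝ᵥ (matLog (hf θ).1) *ᵥ v = ((Qre θ : ℝ) : ℂ) := by
    intro θ
    have h1 := quad_matLog (hf θ).1 v
    have him : (star v ⬝ᵥ (matLog (hf θ).1) *ᵥ v).im = 0 := by rw [h1]; simp
    have h2 : ((Qre θ : ℝ) : ℂ) = ((star v ⬝ᵥ (matLog (hf θ).1) *ᵥ v).re : ℂ) := rfl
    rw [h2]
    exact (Complex.ext (by simp) (by simp [him])).symm
  rw [Matrix.sub_mulVec, dotProduct_sub, hlogF, hLquad]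
  have hQI : (∫ θ in Set.Ico 0 (2 * Real.pi), star v ⬝ᵥ (matLog (hf θ).1) *ᵥ v)
      = (((∫ θ in Set.Ico 0 (2 * Real.pi), Qre θ : ℝ)) : ℂ) := by
    rw [integral_congr_ae (Filter.Eventually.of_forall hq)]
    exact integral_ofReal
  rw [hQI]
  have hsmul : ((2 * Real.pi)⁻¹ : ℝ) • (((∫ θ in Set.Ico 0 (2 * Real.pi), Qre θ : ℝ)) : ℂ)
      = (((2 * Real.pi)⁻¹ * ∫ θ in Set.Ico 0 (2 * Real.pi), Qre θ : ℝ) : ℂ) := by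
    rw [Complex.real_smul, ← Complex.ofReal_mul]
  rw [hsmul, ← Complex.ofReal_sub]
  exact Complex.zero_le_real.2 (by linarith [hfinal])

end MJL

open Matrix Finset

/-- (Matrix Jensen inequality for the logarithm.) If `f` takes Hermitian positive
definite values and both `f` and `log ∘ f` are entrywise integrable on `[0,2π)` with
respect to `dθ/(2π)`, then `F = ∫ f dθ/2π` is Hermitian positive definite and
`∫ log f dθ/2π ⪯ log F`. -/
theorem matrix_jensen_log {ℓ : ℕ}
    (f : ℝ → Matrix (Fin ℓ) (Fin ℓ) ℂ)
    (hf : ∀ θ, (f θ).PosDef)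
    (hmeas : ∀ i j, Measurable fun θ => f θ i j)
    (hint : ∀ i j, IntegrableOn (fun θ => f θ i j) (Set.Ico 0 (2 * Real.pi)))
    (hlogint : ∀ i j,
      IntegrableOn (fun θ => matLog (hf θ).1 i j) (Set.Ico 0 (2 * Real.pi))) :
    ∃ hF : (Matrix.of fun i j =>
        ((2 * Real.pi)⁻¹ : ℝ) • ∫ θ in Set.Ico 0 (2 * Real.pi), f θ i j).PosDef,
      (matLog hF.1 -
        Matrix.of fun i j =>
          ((2 * Real.pi)⁻¹ : ℝ) •
            ∫ θ in Set.Ico 0 (2 * Real.pi), matLog (hf θ).1 i j).PosSemidef := by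
  classical
  have h2π : (0:ℝ) < 2 * Real.pi := Real.two_pi_pos
  have hIvol : volume (Set.Ico (0:ℝ) (2 * Real.pi)) = ENNReal.ofReal (2 * Real.pi) := by
    rw [Real.volume_Ico]; norm_num
  have hFherm : (Matrix.of fun i j =>
      ((2 * Real.pi)⁻¹ : ℝ) • ∫ θ in Set.Ico 0 (2 * Real.pi), f θ i j).IsHermitian :=
    MJL.herm_of_integral f _ _ (fun θ => (hf θ).1)
  have hquadint : ∀ x : Fin ℓ → ℂ,
      IntegrableOn (fun θ => star x ⬝ᵥ (f θ) *ᵥ x) (Set.Ico 0 (2 * Real.pi)) := by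
    intro x
    have he : (fun θ => star x ⬝ᵥ (f θ) *ᵥ x)
        = fun θ => ∑ j, ∑ k, (starRingEnd ℂ) (x j) * f θ j k * x k :=
      funext fun θ => MJL.quad_sum' _ _
    rw [he]
    exact integrable_finset_sum _ fun j _ => integrable_finset_sum _ fun k _ =>
      ((hint j k).const_mul _).mul_const _
  have hFpos : (Matrix.of fun i j =>
      ((2 * Real.pi)⁻¹ : ℝ) • ∫ θ in Set.Ico 0 (2 * Real.pi), f θ i j).PosDef := by
    refine Matrix.PosDef.of_dotProduct_mulVec_pos hFherm fun x hx => ?_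
    rw [MJL.quad_of_integral f _ _ hint x]
    have hpt : ∀ θ, 0 < star x ⬝ᵥ (f θ) *ᵥ x := fun θ => (hf θ).dotProduct_mulVec_pos hx
    have hre : ∀ θ, 0 < (star x ⬝ᵥ (f θ) *ᵥ x).re := fun θ => by
      have := (Complex.lt_def.mp (hpt θ)).1
      simpa using this
    have him : ∀ θ, (star x ⬝ᵥ (f θ) *ᵥ x).im = 0 := fun θ => by
      have := (Complex.lt_def.mp (hpt θ)).2
      simpa using this.symm
    have hzeq : ∀ θ, (star x ⬝ᵥ (f θ) *ᵥ x) = (((star x ⬝ᵥ (f θ) *ᵥ x).re : ℝ) : ℂ) :=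
      fun θ => Complex.ext (by simp) (by simp [him θ])
    have hQI : (∫ θ in Set.Ico 0 (2 * Real.pi), (((star x ⬝ᵥ (f θ) *ᵥ x).re : ℝ) : ℂ))
        = ((∫ θ in Set.Ico 0 (2 * Real.pi), (star x ⬝ᵥ (f θ) *ᵥ x).re : ℝ) : ℂ) :=
      integral_ofReal
    rw [integral_congr_ae (Filter.Eventually.of_forall hzeq), hQI]
    have hreint : IntegrableOn (fun θ => (star x ⬝ᵥ (f θ) *ᵥ x).re)
        (Set.Ico 0 (2 * Real.pi)) := by
      have := (hquadint x).re
      simpa [IntegrableOn] using this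
    have hpos : 0 < ∫ θ in Set.Ico 0 (2 * Real.pi), (star x ⬝ᵥ (f θ) *ᵥ x).re := by
      refine (setIntegral_pos_iff_support_of_nonneg_ae ?_ hreint).2 ?_
      · exact Filter.Eventually.of_forall fun θ => (hre θ).le
      · refine lt_of_lt_of_le ?_ (measure_mono fun θ hθ => ⟨(hre θ).ne', hθ⟩)
        rw [hIvol]
        exact ENNReal.ofReal_pos.2 h2π
    have hmul : (0:ℝ) < (2 * Real.pi)⁻¹
        * ∫ θ in Set.Ico 0 (2 * Real.pi), (star x ⬝ᵥ (f θ) *ᵥ x).re :=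
      mul_pos (inv_pos.2 h2π) hpos
    have hsm : ((2 * Real.pi)⁻¹ : ℝ) •
        ((∫ θ in Set.Ico 0 (2 * Real.pi), (star x ⬝ᵥ (f θ) *ᵥ x).re : ℝ) : ℂ)
        = (((2 * Real.pi)⁻¹
            * ∫ θ in Set.Ico 0 (2 * Real.pi), (star x ⬝ᵥ (f θ) *ᵥ x).re : ℝ) : ℂ) := by
      rw [Complex.real_smul, ← Complex.ofReal_mul]
    rw [hsm]
    exact Complex.zero_lt_real.2 hmul
  exact ⟨hFpos, MJL.core f hf hint hlogint hFpos rfl⟩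
end

section
/- Let g : [0,2π) → M_ℓ(ℂ) be a measurable function whose values are Hermitian positive definite matrices, such that g and θ ↦ log g(θ) are entrywise integrable with respect to dθ/(2π), and suppose the normalization ∫_0^{2π} g(θ) dθ/(2π) = 1 (the identity matrix) holds. Then the matrix B := ∫_0^{2π} log g(θ) dθ/(2π) is Hermitian and B ⪯ 0 (negative semidefinite). -/
open MeasureTheory
open scoped ComplexOrder

lemma matLog_isHermitian {ℓ : ℕ} {A : Matrix (Fin ℓ) (Fin ℓ) ℂ}
    (hA : A.IsHermitian) : (matLog hA).IsHermitian := by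
  unfold matLog
  unfold Matrix.IsHermitian
  rw [Matrix.conjTranspose_mul, Matrix.conjTranspose_mul]
  rw [Matrix.star_eq_conjTranspose, Matrix.conjTranspose_conjTranspose]
  rw [Matrix.diagonal_conjTranspose]
  simp [mul_assoc, Pi.star_def]

lemma sub_one_sub_matLog_posSemidef {ℓ : ℕ} {A : Matrix (Fin ℓ) (Fin ℓ) ℂ}
    (hA : A.PosDef) : (A - 1 - matLog hA.1).PosSemidef := by
  set U : Matrix (Fin ℓ) (Fin ℓ) ℂ := (hA.1.eigenvectorUnitary : Matrix (Fin ℓ) (Fin ℓ) ℂ)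
  have hU : U * star U = 1 := (Matrix.mem_unitaryGroup_iff).mp hA.1.eigenvectorUnitary.2
  have hspec := hA.1.spectral_theorem
  have key : A - 1 - matLog hA.1 =
      U * Matrix.diagonal (fun i =>
        ((hA.1.eigenvalues i - 1 - Real.log (hA.1.eigenvalues i) : ℝ) : ℂ)) * star U := by
    calc A - 1 - matLog hA.1
        = U * Matrix.diagonal (RCLike.ofReal ∘ hA.1.eigenvalues) * star U
          - U * 1 * star U - U * Matrix.diagonal
            (fun i => (Real.log (hA.1.eigenvalues i) : ℂ)) * star U := by
          rw [show U * Matrix.diagonal (RCLike.ofReal ∘ hA.1.eigenvalues) * star U = A from hspec.symm, mul_one, hU]; rfl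
      _ = _ := by
          rw [← Matrix.sub_mul, ← Matrix.sub_mul, ← Matrix.mul_sub, ← Matrix.mul_sub,
            ← Matrix.diagonal_one, Matrix.diagonal_sub, Matrix.diagonal_sub]
          refine congrArg₂ _ (congrArg _ (congrArg Matrix.diagonal (funext fun i => ?_))) rfl
          simp only [Pi.sub_apply, Function.comp_apply, Pi.one_apply,
            show (RCLike.ofReal : ℝ → ℂ) = Complex.ofReal from rfl]
          push_cast
          ring
  rw [key]
  refine Matrix.PosSemidef.mul_mul_conjTranspose_same ?_ U
  refine Matrix.posSemidef_diagonal_iff.mpr fun i => ?_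
  rw [Complex.zero_le_real]
  have := Real.log_le_sub_one_of_pos (hA.eigenvalues_pos i)
  linarith

lemma posSemidef_smul_integral {ℓ : ℕ} (F : ℝ → Matrix (Fin ℓ) (Fin ℓ) ℂ)
    (μ : Measure ℝ) (hF : ∀ θ, (F θ).PosSemidef)
    (hFi : ∀ i j, Integrable (fun θ => F θ i j) μ)
    {c : ℝ} (hc : 0 ≤ c) :
    (Matrix.of fun i j => c • ∫ θ, F θ i j ∂μ).PosSemidef := by
  rw [Matrix.posSemidef_iff_dotProduct_mulVec]
  constructor
  · refine Matrix.ext fun i j => ?_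
    simp only [Matrix.conjTranspose_apply, Matrix.of_apply]
    rw [star_smul, star_trivial c]
    congr 1
    rw [Complex.star_def, ← integral_conj]
    refine integral_congr_ae (Filter.Eventually.of_forall fun θ => ?_)
    exact (hF θ).1.apply i j
  · intro x
    have expand : ∀ (N : Matrix (Fin ℓ) (Fin ℓ) ℂ),
        dotProduct (star x) (N.mulVec x) =
          ∑ i, ∑ j, starRingEnd ℂ (x i) * N i j * x j := by
      intro N
      simp [dotProduct, Matrix.mulVec, Finset.mul_sum, mul_assoc]
    have hQi : Integrable (fun θ => dotProduct (star x) ((F θ).mulVec x)) μ := by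
      simp only [expand]
      refine integrable_finset_sum _ fun i _ => integrable_finset_sum _ fun j _ => ?_
      exact ((hFi i j).const_mul _).mul_const _
    have hterm : ∀ (i j : Fin ℓ),
        Integrable (fun θ => starRingEnd ℂ (x i) * (c • F θ i j) * x j) μ :=
      fun i j => (((hFi i j).smul c).const_mul _).mul_const _
    have step : dotProduct (star x)
          ((Matrix.of fun i j => c • ∫ θ, F θ i j ∂μ).mulVec x) =
        ∫ θ, c • dotProduct (star x) ((F θ).mulVec x) ∂μ := by
      rw [expand]
      simp only [Matrix.of_apply]
      have h1 : ∀ (i j : Fin ℓ), starRingEnd ℂ (x i) * (c • ∫ θ, F θ i j ∂μ) * x j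
          = ∫ θ, starRingEnd ℂ (x i) * (c • F θ i j) * x j ∂μ := fun i j => by
        rw [← integral_smul, ← integral_const_mul, ← integral_mul_const]
      simp only [h1]
      have h2 : ∀ i : Fin ℓ, ∑ j, ∫ θ, starRingEnd ℂ (x i) * (c • F θ i j) * x j ∂μ
          = ∫ θ, ∑ j, starRingEnd ℂ (x i) * (c • F θ i j) * x j ∂μ :=
        fun i => (integral_finset_sum _ fun j _ => hterm i j).symm
      simp only [h2]
      rw [← integral_finset_sum _ fun i _ => integrable_finset_sum _ fun j _ => hterm i j]
      refine integral_congr_ae (Filter.Eventually.of_forall fun θ => ?_)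
      show ∑ i, ∑ j, starRingEnd ℂ (x i) * (c • F θ i j) * x j
          = c • dotProduct (star x) ((F θ).mulVec x)
      rw [expand, Finset.smul_sum]
      refine Finset.sum_congr rfl fun i _ => ?_
      rw [Finset.smul_sum]
      refine Finset.sum_congr rfl fun j _ => ?_
      rw [mul_smul_comm, smul_mul_assoc]
    rw [step, integral_smul]
    have hnn : 0 ≤ ∫ θ, dotProduct (star x) ((F θ).mulVec x) ∂μ := by
      rw [Complex.nonneg_iff]
      constructor
      · have h3 : (∫ θ, dotProduct (star x) ((F θ).mulVec x) ∂μ).re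
            = ∫ θ, (dotProduct (star x) ((F θ).mulVec x)).re ∂μ := by
          simpa using (integral_re hQi).symm
        rw [h3]
        exact integral_nonneg fun θ => (Complex.nonneg_iff.mp ((Matrix.posSemidef_iff_dotProduct_mulVec.mp (hF θ)).2 x)).1
      · have h4 : (∫ θ, dotProduct (star x) ((F θ).mulVec x) ∂μ).im
            = ∫ θ, (dotProduct (star x) ((F θ).mulVec x)).im ∂μ := by
          simpa using (integral_im hQi).symm
        rw [h4]
        symm
        refine integral_eq_zero_of_ae (Filter.Eventually.of_forall fun θ => ?_)
        exact ((Complex.nonneg_iff.mp ((Matrix.posSemidef_iff_dotProduct_mulVec.mp (hF θ)).2 x)).2).symm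
    rw [Complex.real_smul]
    exact mul_nonneg (by exact_mod_cast Complex.zero_le_real.mpr hc) hnn

/-- If `g` takes Hermitian positive definite values, `g` and `log ∘ g` are entrywise
integrable on `[0,2π)` with respect to `dθ/(2π)`, and `∫ g dθ/2π = 1`, then
`B = ∫ log g dθ/2π` is Hermitian and negative semidefinite. -/
theorem integral_log_nonpos {ℓ : ℕ}
    (g : ℝ → Matrix (Fin ℓ) (Fin ℓ) ℂ)
    (hg : ∀ θ, (g θ).PosDef)
    (hmeas : ∀ i j, Measurable fun θ => g θ i j)
    (hint : ∀ i j, IntegrableOn (fun θ => g θ i j) (Set.Ico 0 (2 * Real.pi)))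
    (hlogint : ∀ i j,
      IntegrableOn (fun θ => matLog (hg θ).1 i j) (Set.Ico 0 (2 * Real.pi)))
    (hnorm : (Matrix.of fun i j =>
        ((2 * Real.pi)⁻¹ : ℝ) • ∫ θ in Set.Ico 0 (2 * Real.pi), g θ i j) =
      (1 : Matrix (Fin ℓ) (Fin ℓ) ℂ)) :
    (Matrix.of fun i j =>
        ((2 * Real.pi)⁻¹ : ℝ) •
          ∫ θ in Set.Ico 0 (2 * Real.pi), matLog (hg θ).1 i j).IsHermitian ∧
    (-(Matrix.of fun i j =>
        ((2 * Real.pi)⁻¹ : ℝ) •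
          ∫ θ in Set.Ico 0 (2 * Real.pi), matLog (hg θ).1 i j)).PosSemidef := by
  have hπ : (0:ℝ) < 2 * Real.pi := by positivity
  set S := Set.Ico (0:ℝ) (2 * Real.pi) with hS
  have hconst : ∀ (z : ℂ), IntegrableOn (fun _ : ℝ => z) S := fun z =>
    integrableOn_const (by rw [hS, Real.volume_Ico]; exact ENNReal.ofReal_ne_top)
  set F : ℝ → Matrix (Fin ℓ) (Fin ℓ) ℂ := fun θ => g θ - 1 - matLog (hg θ).1 with hF
  have hFpos : ∀ θ, (F θ).PosSemidef := fun θ => sub_one_sub_matLog_posSemidef (hg θ)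
  have hFi : ∀ i j, Integrable (fun θ => F θ i j) (volume.restrict S) := by
    intro i j
    have h : (fun θ => F θ i j) = fun θ =>
        g θ i j - (1 : Matrix (Fin ℓ) (Fin ℓ) ℂ) i j - matLog (hg θ).1 i j := rfl
    rw [h]
    exact ((hint i j).sub (hconst _)).sub (hlogint i j)
  have hM := posSemidef_smul_integral F (volume.restrict S) hFpos hFi
    (c := (2 * Real.pi)⁻¹) (by positivity)
  have hMB : (Matrix.of fun i j => (2 * Real.pi)⁻¹ • ∫ θ, F θ i j ∂(volume.restrict S)) =
      -(Matrix.of fun i j =>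
        ((2 * Real.pi)⁻¹ : ℝ) • ∫ θ in S, matLog (hg θ).1 i j) := by
    refine Matrix.ext fun i j => ?_
    simp only [Matrix.of_apply, Matrix.neg_apply]
    have e1 : ∫ θ, F θ i j ∂(volume.restrict S) =
        (∫ θ in S, g θ i j) - (2 * Real.pi) • (1 : Matrix (Fin ℓ) (Fin ℓ) ℂ) i j
          - ∫ θ in S, matLog (hg θ).1 i j := by
      rw [show (fun θ => F θ i j) = fun θ =>
        g θ i j - (1 : Matrix (Fin ℓ) (Fin ℓ) ℂ) i j - matLog (hg θ).1 i j from rfl]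
      rw [integral_sub (f := fun θ => g θ i j - (1 : Matrix (Fin ℓ) (Fin ℓ) ℂ) i j)
          (g := fun θ => matLog (hg θ).1 i j) ((hint i j).sub (hconst _)) (hlogint i j),
        integral_sub (f := fun θ => g θ i j)
          (g := fun _ => (1 : Matrix (Fin ℓ) (Fin ℓ) ℂ) i j) (hint i j) (hconst _),
        setIntegral_const, hS, Real.volume_real_Ico, sub_zero, max_eq_left hπ.le]
    rw [e1]
    have hentry : ((2 * Real.pi)⁻¹ : ℝ) • ∫ θ in S, g θ i j =
        (1 : Matrix (Fin ℓ) (Fin ℓ) ℂ) i j := by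
      have := congrFun (congrFun hnorm i) j
      simpa using this
    rw [smul_sub, smul_sub, hentry, smul_smul, inv_mul_cancel₀ (ne_of_gt hπ), one_smul]
    abel
  rw [hMB] at hM
  refine ⟨?_, hM⟩
  have h1 := hM.1
  simpa using h1.neg
end

section
/- Let P be an ℓ×ℓ matrix polynomial (a polynomial in z with coefficients in M_ℓ(ℂ)) such that det P(z) ≠ 0 for every z ∈ ℂ with |z| ≤ 1. Then ∫_0^{2π} log det(P(e^{iθ})† P(e^{iθ})) dθ/(2π) = 2·log |det P(0)|, where det(P(e^{iθ})† P(e^{iθ})) = |det P(e^{iθ})|² is a positive real number for each θ. -/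
open Complex
open Matrix MeasureTheory
open scoped ComplexOrder

section Aux

lemma hne_aux (r : ℂ) (hr : 1 < ‖r‖) :
    ∀ θ : ℝ, (1 - Complex.exp (θ*I) / r) ≠ 0 := by
    intro θ hθ
    have h1 : ‖Complex.exp (θ*I) / r‖ < 1 := by
      rw [norm_div, Complex.norm_exp]
      rw [div_lt_one (by linarith : (0:ℝ) < ‖r‖)]
      simpa using hr
    rw [sub_eq_zero] at hθ
    rw [← hθ] at h1
    simp at h1

lemma cont_log_abs_one_sub (r : ℂ) (hr : 1 < ‖r‖) :
    Continuous (fun θ : ℝ => Real.log (‖1 - Complex.exp (θ*I) / r‖)) := by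
  have hne := hne_aux r hr
  have hcont : Continuous (fun θ : ℝ => (1 - Complex.exp (θ*I) / r)) := by
    continuity
  exact (continuous_norm.comp hcont).log fun θ => norm_ne_zero_iff.mpr (hne θ)

lemma hslit_aux (r : ℂ) (hr : 1 < ‖r‖) :
    ∀ z : ℂ, ‖z‖ ≤ 1 → (1 - z / r) ∈ Complex.slitPlane := by
  intro z hz
  refine Complex.mem_slitPlane_iff.2 (Or.inl ?_)
  have h1 : ‖z / r‖ < 1 := by
    rw [norm_div]
    rw [div_lt_one (by linarith)]
    linarith
  have h2 : (z / r).re ≤ ‖z / r‖ := Complex.re_le_norm _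
  simp only [Complex.sub_re, Complex.one_re]
  linarith

lemma circle_log_abs (r : ℂ) (hr : 1 < ‖r‖) :
    ∫ θ in (0:ℝ)..(2*Real.pi), Real.log (‖Complex.exp (θ*I) - r‖)
      = 2 * Real.pi * Real.log (‖r‖) := by
  have hr0 : r ≠ 0 := by intro h; simp [h] at hr; linarith
  have hslit := hslit_aux r hr
  set f : ℂ → ℂ := fun z => Complex.log (1 - z / r) with hf
  have hdiff : DifferentiableOn ℂ f (Metric.closedBall 0 1) := by
    intro z hz
    have hz1 : ‖z‖ ≤ 1 := by simpa [Complex.dist_eq] using hz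
    exact ((((differentiable_const (1:ℂ)).sub (differentiable_id.div_const r) : Differentiable ℂ (fun x : ℂ => 1 - x / r))).differentiableAt.clog
      (hslit z hz1)).differentiableWithinAt
  have hcauchy := hdiff.circleIntegral_sub_inv_smul (c := 0) (w := 0)
    (by simp [Real.pi_pos] : (0:ℂ) ∈ Metric.ball 0 1)
  have hf0 : f 0 = 0 := by simp [hf]
  rw [hf0, smul_zero] at hcauchy
  rw [circleIntegral] at hcauchy
  simp only [deriv_circleMap, circleMap_zero, smul_eq_mul, sub_zero, one_mul, ofReal_one] at hcauchy
  have key : ∫ θ in (0:ℝ)..(2*Real.pi), f (Complex.exp (θ*I)) = 0 := by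
    have h0 : ∫ θ in (0:ℝ)..(2*Real.pi), (Complex.exp (θ*I) * I) * ((Complex.exp (θ*I))⁻¹ * f (Complex.exp (θ*I))) = 0 := by
      simpa using hcauchy
    have heq : ∀ θ : ℝ, (Complex.exp (θ*I) * I) * ((Complex.exp (θ*I))⁻¹ * f (Complex.exp (θ*I)))
        = I * f (Complex.exp (θ*I)) := by
      intro θ
      have : Complex.exp (θ*I) ≠ 0 := Complex.exp_ne_zero _
      field_simp
    rw [intervalIntegral.integral_congr (fun θ _ => heq θ)] at h0
    rw [intervalIntegral.integral_const_mul] at h0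
    simpa [Complex.I_ne_zero] using h0
  have hcontC : Continuous (fun θ : ℝ => f (Complex.exp (θ*I))) := by
    have hc2 : Continuous (fun θ : ℝ => (1 - Complex.exp (θ*I) / r)) := by continuity
    refine continuous_iff_continuousAt.2 fun θ => ?_
    exact hc2.continuousAt.clog (hslit _ (by simp [Complex.norm_exp]))
  have hpos : (0:ℝ) ≤ 2*Real.pi := by positivity
  have hre : ∫ θ in (0:ℝ)..(2*Real.pi), Real.log (‖1 - Complex.exp (θ*I) / r‖) = 0 := by
    have : ∫ θ in (0:ℝ)..(2*Real.pi), (f (Complex.exp (θ*I))).re = 0 := by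
      rw [intervalIntegral.integral_of_le hpos] at key ⊢
      simp only [← RCLike.re_eq_complex_re]
      rw [integral_re ((hcontC.integrableOn_Icc (a := 0) (b := 2*Real.pi)).mono_set Set.Ioc_subset_Icc_self), key]
      simp
    simpa [hf, Complex.log_re] using this
  have heq2 : ∀ θ : ℝ, Real.log (‖Complex.exp (θ*I) - r‖)
      = Real.log (‖r‖) + Real.log (‖1 - Complex.exp (θ*I) / r‖) := by
    intro θ
    have h1 : Complex.exp (θ*I) - r = (-r) * (1 - Complex.exp (θ*I) / r) := by
      field_simp
      ring
    rw [h1, norm_mul, norm_neg,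
      Real.log_mul (norm_ne_zero_iff.mpr hr0) (norm_ne_zero_iff.mpr (hne_aux r hr θ))]
  rw [intervalIntegral.integral_congr (fun θ _ => heq2 θ)]
  rw [intervalIntegral.integral_add (intervalIntegrable_const) ((cont_log_abs_one_sub r hr).intervalIntegrable _ _)]
  rw [hre]
  simp [mul_comm]

lemma exp_sub_ne (r : ℂ) (hr : 1 < ‖r‖) (θ : ℝ) : Complex.exp (θ*I) - r ≠ 0 := by
  intro h
  rw [sub_eq_zero] at h
  rw [← h] at hr
  simp [Complex.norm_exp] at hr

lemma log_abs_sub_eq (r : ℂ) (hr : 1 < ‖r‖) (θ : ℝ) :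
    Real.log (‖Complex.exp (θ*I) - r‖)
      = Real.log (‖r‖) + Real.log (‖1 - Complex.exp (θ*I) / r‖) := by
  have hr0 : r ≠ 0 := by intro h; simp [h] at hr; linarith
  have h1 : Complex.exp (θ*I) - r = (-r) * (1 - Complex.exp (θ*I) / r) := by
    field_simp; ring
  have h2 : (1 - Complex.exp (θ*I) / r) ≠ 0 := by
    intro h
    have := h1 ▸ exp_sub_ne r hr θ
    simp [h] at this
  rw [h1, norm_mul, norm_neg,
    Real.log_mul (norm_ne_zero_iff.mpr hr0) (norm_ne_zero_iff.mpr h2)]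

lemma cont_log_abs_sub (r : ℂ) (hr : 1 < ‖r‖) :
    Continuous (fun θ : ℝ => Real.log (‖Complex.exp (θ*I) - r‖)) := by
  have : (fun θ : ℝ => Real.log (‖Complex.exp (θ*I) - r‖))
      = fun θ : ℝ => Real.log (‖r‖) + Real.log (‖1 - Complex.exp (θ*I) / r‖) :=
    funext (log_abs_sub_eq r hr)
  rw [this]
  exact continuous_const.add (cont_log_abs_one_sub r hr)

lemma multiset_circle (s : Multiset ℂ) (hs : ∀ r ∈ s, 1 < ‖r‖) :
    Continuous (fun θ : ℝ =>
        Real.log (‖(s.map (fun r => Complex.exp (θ*I) - r)).prod‖)) ∧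
    ∫ θ in (0:ℝ)..(2*Real.pi),
        Real.log (‖(s.map (fun r => Complex.exp (θ*I) - r)).prod‖)
      = 2 * Real.pi * Real.log (‖(s.map (fun r => (0:ℂ) - r)).prod‖) := by
  induction s using Multiset.induction_on with
  | empty => exact ⟨by simpa using continuous_const, by simp⟩
  | cons r t ih =>
    have hr : 1 < ‖r‖ := hs r (Multiset.mem_cons_self r t)
    have ht : ∀ x ∈ t, 1 < ‖x‖ := fun x hx => hs x (Multiset.mem_cons_of_mem hx)
    obtain ⟨ihc, ihi⟩ := ih ht
    have hprodne : ∀ θ : ℝ, (t.map (fun x => Complex.exp (θ*I) - x)).prod ≠ 0 := by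
      intro θ
      refine Multiset.prod_ne_zero ?_
      simp only [Multiset.mem_map]
      rintro ⟨x, hx, hx0⟩
      exact exp_sub_ne x (ht x hx) θ hx0
    have hsplit : ∀ θ : ℝ,
        Real.log (‖((r ::ₘ t).map (fun x => Complex.exp (θ*I) - x)).prod‖)
          = Real.log (‖Complex.exp (θ*I) - r‖)
            + Real.log (‖(t.map (fun x => Complex.exp (θ*I) - x)).prod‖) := by
      intro θ
      rw [Multiset.map_cons, Multiset.prod_cons, norm_mul,
        Real.log_mul (norm_ne_zero_iff.mpr (exp_sub_ne r hr θ)) (norm_ne_zero_iff.mpr (hprodne θ))]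
    constructor
    · simp only [hsplit]
      exact (cont_log_abs_sub r hr).add ihc
    · rw [intervalIntegral.integral_congr (fun θ _ => hsplit θ),
        intervalIntegral.integral_add ((cont_log_abs_sub r hr).intervalIntegrable _ _)
          (ihc.intervalIntegrable _ _), circle_log_abs r hr, ihi]
      have hprodne0 : (t.map (fun x => (0:ℂ) - x)).prod ≠ 0 := by
        refine Multiset.prod_ne_zero ?_
        simp only [Multiset.mem_map]
        rintro ⟨x, hx, hx0⟩
        rw [zero_sub, neg_eq_zero] at hx0
        have := ht x hx
        simp [hx0] at this
        linarith
      rw [Multiset.map_cons, Multiset.prod_cons, norm_mul,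
        Real.log_mul (by simpa using norm_ne_zero_iff.mpr (fun h => by simp [h] at hr; linarith : r ≠ 0))
          (norm_ne_zero_iff.mpr hprodne0)]
      simp only [zero_sub, norm_neg]
      ring

end Aux

open Matrix MeasureTheory
open scoped ComplexOrder

/-- If `P` is an `ℓ×ℓ` matrix polynomial with `det P(z) ≠ 0` throughout the closed unit
disc, then `∫₀^{2π} log det(P(e^{iθ})† P(e^{iθ})) dθ/2π = 2 log |det P(0)|`,
where `det(P(e^{iθ})† P(e^{iθ})) = |det P(e^{iθ})|²` is a positive real number. -/
theorem mean_log_det_modulus {ℓ : ℕ}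
    (P : Matrix (Fin ℓ) (Fin ℓ) (Polynomial ℂ))
    (hP : ∀ z : ℂ, ‖z‖ ≤ 1 → (P.map (Polynomial.eval z)).det ≠ 0) :
    (∀ θ : ℝ,
      ((P.map (Polynomial.eval (Complex.exp (θ * Complex.I))))ᴴ *
          P.map (Polynomial.eval (Complex.exp (θ * Complex.I)))).det =
        ((‖(P.map (Polynomial.eval (Complex.exp (θ * Complex.I)))).det‖ ^ 2 : ℝ) : ℂ) ∧
      0 < ‖(P.map (Polynomial.eval (Complex.exp (θ * Complex.I)))).det‖ ^ 2) ∧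
    ((2 * Real.pi)⁻¹ : ℝ) * ∫ θ in Set.Ico 0 (2 * Real.pi),
        Real.log (‖(P.map (Polynomial.eval (Complex.exp (θ * Complex.I)))).det‖ ^ 2) =
      2 * Real.log (‖(P.map (Polynomial.eval 0)).det‖) := by
  have hexp1 : ∀ θ : ℝ, ‖Complex.exp (θ * Complex.I)‖ ≤ 1 := by
    intro θ; simp [Complex.norm_exp]
  constructor
  · intro θ
    have hA := hP _ (hexp1 θ)
    constructor
    · rw [Matrix.det_mul, Matrix.det_conjTranspose, Complex.star_def, mul_comm,
        Complex.mul_conj, Complex.normSq_eq_norm_sq]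
    · exact pow_pos ((norm_pos_iff.mpr hA)) 2
  · set Q : Polynomial ℂ := P.det with hQdef
    have hdet : ∀ z : ℂ, (P.map (Polynomial.eval z)).det = Q.eval z := by
      intro z
      rw [hQdef, ← Polynomial.coe_evalRingHom, ← RingHom.mapMatrix_apply, ← RingHom.map_det]
    have hQ : ∀ z : ℂ, ‖z‖ ≤ 1 → Q.eval z ≠ 0 := fun z hz => hdet z ▸ hP z hz
    have hQne : Q ≠ 0 := fun h => hQ 0 (by simp) (by simp [h])
    have hroots : ∀ r ∈ Q.roots, 1 < ‖r‖ := by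
      intro r hr
      by_contra h
      push_neg at h
      exact hQ r h ((Polynomial.mem_roots'.1 hr).2)
    set c : ℂ := Q.leadingCoeff with hcdef
    have hc : c ≠ 0 := Polynomial.leadingCoeff_ne_zero.2 hQne
    have hfac : Q = Polynomial.C c * (Q.roots.map (fun a => Polynomial.X - Polynomial.C a)).prod :=
      (IsAlgClosed.splits Q).eq_prod_roots
    have heval : ∀ z : ℂ, Q.eval z = c * ((Q.roots.map (fun a => z - a)).prod) := by
      intro z
      conv_lhs => rw [hfac]
      rw [Polynomial.eval_mul, Polynomial.eval_C, Polynomial.eval_multiset_prod,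
        Multiset.map_map]
      simp [Function.comp]
    obtain ⟨hcont, hint⟩ := multiset_circle Q.roots hroots
    have hprodθ : ∀ θ : ℝ, ((Q.roots.map (fun a => Complex.exp (θ*Complex.I) - a)).prod) ≠ 0 := by
      intro θ
      refine Multiset.prod_ne_zero ?_
      simp only [Multiset.mem_map]
      rintro ⟨x, hx, hx0⟩
      exact exp_sub_ne x (hroots x hx) θ hx0
    have hprod0 : ((Q.roots.map (fun a => (0:ℂ) - a)).prod) ≠ 0 := by
      refine Multiset.prod_ne_zero ?_
      simp only [Multiset.mem_map]
      rintro ⟨x, hx, hx0⟩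
      rw [zero_sub, neg_eq_zero] at hx0
      have := hroots x hx
      rw [hx0] at this
      simp at this
      linarith
    have hlog : ∀ θ : ℝ,
        Real.log (‖(P.map (Polynomial.eval (Complex.exp (θ * Complex.I)))).det‖ ^ 2)
          = 2 * (Real.log (‖c‖)
            + Real.log (‖(Q.roots.map (fun a => Complex.exp (θ*Complex.I) - a)).prod‖)) := by
      intro θ
      rw [hdet, heval, Real.log_pow, norm_mul,
        Real.log_mul (norm_ne_zero_iff.mpr hc) (norm_ne_zero_iff.mpr (hprodθ θ))]
      push_cast
      ring
    have hIco : ∫ θ in Set.Ico (0:ℝ) (2 * Real.pi),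
        Real.log (‖(P.map (Polynomial.eval (Complex.exp (θ * Complex.I)))).det‖ ^ 2)
        = ∫ θ in (0:ℝ)..(2*Real.pi),
            Real.log (‖(P.map (Polynomial.eval (Complex.exp (θ * Complex.I)))).det‖ ^ 2) := by
      rw [setIntegral_congr_set Ico_ae_eq_Ioc,
        ← intervalIntegral.integral_of_le (by positivity : (0:ℝ) ≤ 2*Real.pi)]
    rw [hIco, intervalIntegral.integral_congr (fun θ _ => hlog θ),
      intervalIntegral.integral_const_mul,
      intervalIntegral.integral_add intervalIntegrable_const (hcont.intervalIntegrable _ _),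
      intervalIntegral.integral_const, hint]
    rw [hdet, heval, norm_mul,
      Real.log_mul (norm_ne_zero_iff.mpr hc) (norm_ne_zero_iff.mpr hprod0)]
    have hpi : (2 * Real.pi) ≠ 0 := by positivity
    field_simp
    ring
end

section
/- Let α ∈ M_ℓ(ℂ) with ‖α‖ < 1, and set ρ^L = (1 − α†α)^{1/2} and ρ^R = (1 − αα†)^{1/2} (the positive semidefinite square roots, which are invertible). Then the 2ℓ×2ℓ block matrix A^L(α,z) = [[z(ρ^L)^{-1}, −(ρ^L)^{-1}α†], [−z(ρ^R)^{-1}α, (ρ^R)^{-1}]] satisfies det A^L(α,z) = z^ℓ for every z ∈ ℂ. -/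
open Matrix
open scoped ComplexOrder

/-- The operator norm of a matrix, induced by the Euclidean norm on `ℂ^ℓ`. -/
noncomputable def opNorm {ℓ : ℕ} (M : Matrix (Fin ℓ) (Fin ℓ) ℂ) : ℝ :=
  ‖Matrix.toEuclideanCLM (𝕜 := ℂ) M‖

/-- The positive semidefinite square root of a positive semidefinite matrix
(the definition `Matrix.PosSemidef.sqrt` of the older Mathlib, since removed). -/
noncomputable def Matrix.PosSemidef.sqrt {n : Type*} [Fintype n] [DecidableEq n] {𝕜 : Type*}
    [RCLike 𝕜] {A : Matrix n n 𝕜} (hA : A.PosSemidef) : Matrix n n 𝕜 :=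
  hA.1.eigenvectorUnitary.1 * diagonal ((↑) ∘ (√·) ∘ hA.1.eigenvalues) *
  (star hA.1.eigenvectorUnitary : Matrix n n 𝕜)

lemma Matrix.PosSemidef.sqrt_mul_self {n : Type*} [Fintype n] [DecidableEq n] {𝕜 : Type*}
    [RCLike 𝕜] {A : Matrix n n 𝕜} (hA : A.PosSemidef) : hA.sqrt * hA.sqrt = A := by
  have hU : (star hA.1.eigenvectorUnitary : Matrix n n 𝕜) * hA.1.eigenvectorUnitary.1 = 1 :=
    Unitary.star_mul_self_of_mem hA.1.eigenvectorUnitary.2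
  have hD : diagonal ((↑) ∘ (√·) ∘ hA.1.eigenvalues) * diagonal ((↑) ∘ (√·) ∘ hA.1.eigenvalues)
      = diagonal (RCLike.ofReal ∘ hA.1.eigenvalues : n → 𝕜) := by
    rw [diagonal_mul_diagonal]
    congr 1
    funext i
    simp only [Function.comp_apply]
    rw [← RCLike.ofReal_mul, Real.mul_self_sqrt (hA.eigenvalues_nonneg i)]
  conv_rhs => rw [hA.1.spectral_theorem, Unitary.conjStarAlgAut_apply]
  unfold Matrix.PosSemidef.sqrt
  simp only [Matrix.mul_assoc]
  rw [← Matrix.mul_assoc _ _ (diagonal _ * _), hU, Matrix.one_mul, ← Matrix.mul_assoc (diagonal _), hD]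

lemma Matrix.PosSemidef.posSemidef_sqrt {n : Type*} [Fintype n] [DecidableEq n] {𝕜 : Type*}
    [RCLike 𝕜] {A : Matrix n n 𝕜} (hA : A.PosSemidef) : hA.sqrt.PosSemidef := by
  unfold Matrix.PosSemidef.sqrt
  have := (posSemidef_diagonal_iff (d := ((↑) ∘ (√·) ∘ hA.1.eigenvalues : n → 𝕜))).mpr
    (fun i => by simp [Real.sqrt_nonneg])
  have h := this.mul_mul_conjTranspose_same (hA.1.eigenvectorUnitary.1)
  rwa [← Matrix.star_eq_conjTranspose] at h

set_option synthInstance.maxHeartbeats 1000000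
set_option maxHeartbeats 1000000

lemma psd_det_nonneg {ℓ : ℕ} {M : Matrix (Fin ℓ) (Fin ℓ) ℂ} (h : M.PosSemidef) :
    ∃ r : ℝ, 0 ≤ r ∧ M.det = (r : ℂ) := by
  refine ⟨∏ i, h.1.eigenvalues i, Finset.prod_nonneg fun i _ => h.eigenvalues_nonneg i, ?_⟩
  rw [h.1.det_eq_prod_eigenvalues]
  push_cast
  rfl

lemma aux_isUnit {A : Type*} [NormedRing A] [CompleteSpace A] [StarRing A]
    [NormedStarGroup A] (L : A) (h : ‖L‖ < 1) :
    IsUnit (1 - star L * L) ∧ IsUnit (1 - L * star L) := by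
  have hnn : 0 ≤ ‖L‖ := norm_nonneg _
  have h1 : ‖star L * L‖ < 1 :=
    lt_of_le_of_lt (le_trans (norm_mul_le _ _) (by rw [norm_star])) (by nlinarith)
  have h2 : ‖L * star L‖ < 1 :=
    lt_of_le_of_lt (le_trans (norm_mul_le _ _) (by rw [norm_star])) (by nlinarith)
  exact ⟨(Units.oneSub _ h1).isUnit, (Units.oneSub _ h2).isUnit⟩

lemma isUnit_one_sub_mul {ℓ : ℕ} (α : Matrix (Fin ℓ) (Fin ℓ) ℂ) (hα : opNorm α < 1) :
    IsUnit (1 - αᴴ * α) ∧ IsUnit (1 - α * αᴴ) := by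
  obtain ⟨hu1, hu2⟩ := aux_isUnit (Matrix.toEuclideanCLM (𝕜 := ℂ) α) hα
  set e := Matrix.toEuclideanCLM (𝕜 := ℂ) (n := Fin ℓ)
  have he1 : e.symm (1 - star (e α) * (e α)) = 1 - αᴴ * α := by
    simp [map_sub, _root_.map_mul, map_star, ← Matrix.star_eq_conjTranspose]
  have he2 : e.symm (1 - (e α) * star (e α)) = 1 - α * αᴴ := by
    simp [map_sub, _root_.map_mul, map_star, ← Matrix.star_eq_conjTranspose]
  exact ⟨he1 ▸ hu1.map e.symm, he2 ▸ hu2.map e.symm⟩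


/-- For a strict contraction `α`, with `ρ^L = (1 - α†α)^{1/2}` and
`ρ^R = (1 - αα†)^{1/2}` (positive semidefinite square roots, which are invertible),
the block matrix `A^L(α,z) = [[z(ρ^L)⁻¹, -(ρ^L)⁻¹α†], [-z(ρ^R)⁻¹α, (ρ^R)⁻¹]]`
has determinant `z^ℓ` for every `z ∈ ℂ`. -/
theorem det_szegoe_transfer_matrix {ℓ : ℕ}
    (α : Matrix (Fin ℓ) (Fin ℓ) ℂ) (hα : opNorm α < 1)
    (h1 : (1 - αᴴ * α).PosSemidef) (h2 : (1 - α * αᴴ).PosSemidef) :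
    IsUnit h1.sqrt ∧ IsUnit h2.sqrt ∧
    ∀ z : ℂ,
      (Matrix.fromBlocks
        (z • h1.sqrt⁻¹) (-(h1.sqrt⁻¹ * αᴴ))
        (-(z • (h2.sqrt⁻¹ * α))) h2.sqrt⁻¹).det = z ^ ℓ := by
  obtain ⟨hu1, hu2⟩ := isUnit_one_sub_mul α hα
  set S := h1.sqrt with hS
  set R := h2.sqrt with hR
  have hSS : S * S = 1 - αᴴ * α := h1.sqrt_mul_self
  have hRR : R * R = 1 - α * αᴴ := h2.sqrt_mul_self
  have hdS : S.det ≠ 0 := by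
    have := (Matrix.isUnit_iff_isUnit_det _).mp hu1
    rw [← hSS, Matrix.det_mul] at this
    exact fun h => by simp [h] at this
  have hdR : R.det ≠ 0 := by
    have := (Matrix.isUnit_iff_isUnit_det _).mp hu2
    rw [← hRR, Matrix.det_mul] at this
    exact fun h => by simp [h] at this
  have hUS : IsUnit S := (Matrix.isUnit_iff_isUnit_det _).mpr (isUnit_iff_ne_zero.mpr hdS)
  have hUR : IsUnit R := (Matrix.isUnit_iff_isUnit_det _).mpr (isUnit_iff_ne_zero.mpr hdR)
  refine ⟨hUS, hUR, fun z => ?_⟩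
  -- det S = det R
  obtain ⟨r1, hr1, hdet1⟩ := psd_det_nonneg h1.posSemidef_sqrt
  obtain ⟨r2, hr2, hdet2⟩ := psd_det_nonneg h2.posSemidef_sqrt
  rw [← hS] at hdet1
  rw [← hR] at hdet2
  have hsq : (r1 : ℂ) ^ 2 = (r2 : ℂ) ^ 2 := by
    rw [← hdet1, ← hdet2, sq, sq, ← Matrix.det_mul, ← Matrix.det_mul, hSS, hRR,
      Matrix.det_one_sub_mul_comm]
  have hr12 : r1 = r2 := by
    have : r1 ^ 2 = r2 ^ 2 := by exact_mod_cast hsq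
    nlinarith
  have hdSR : S.det = R.det := by rw [hdet1, hdet2, hr12]
  -- invertibility of R⁻¹
  haveI : Invertible (R⁻¹) := ⟨R, Matrix.mul_nonsing_inv R (isUnit_iff_ne_zero.mpr hdR),
    Matrix.nonsing_inv_mul R (isUnit_iff_ne_zero.mpr hdR)⟩
  rw [Matrix.det_fromBlocks₂₂]
  have hinv : (⅟(R⁻¹) : Matrix (Fin ℓ) (Fin ℓ) ℂ) = R := by
    rw [invOf_eq_nonsing_inv, Matrix.nonsing_inv_nonsing_inv R (isUnit_iff_ne_zero.mpr hdR)]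
  have hkey : z • S⁻¹ - -(S⁻¹ * αᴴ) * ⅟(R⁻¹) * -(z • (R⁻¹ * α)) = z • S := by
    rw [hinv]
    have hRRinv : R * R⁻¹ = 1 := Matrix.mul_nonsing_inv R (isUnit_iff_ne_zero.mpr hdR)
    have hSinv : S⁻¹ * (S * S) = S := by
      rw [← Matrix.mul_assoc, Matrix.nonsing_inv_mul S (isUnit_iff_ne_zero.mpr hdS), Matrix.one_mul]
    have expand : -(S⁻¹ * αᴴ) * R * -(z • (R⁻¹ * α)) =
        z • (S⁻¹ * (αᴴ * (R * (R⁻¹ * α)))) := by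
      simp [Matrix.mul_smul, Matrix.mul_assoc]
    rw [expand, ← Matrix.mul_assoc R, hRRinv, Matrix.one_mul, ← smul_sub]
    have hms : S⁻¹ * (1 - αᴴ * α) = S⁻¹ - S⁻¹ * (αᴴ * α) := by
      rw [Matrix.mul_sub, Matrix.mul_one]
    rw [← hms, ← hSS, hSinv]
  rw [hkey, Matrix.det_smul, Matrix.det_nonsing_inv, Fintype.card_fin, hdSR,
    Ring.inverse_eq_inv']
  field_simp
end
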